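/- arXiv:1210.1915 — 4 statements merged into one kernel-verified Lean document; each statement's English description precedes it below -/
import Mathlib

section
/- (Menger / maxflow-mincut, edge version) In a finite directed graph G with vertex set A and a vertex t ∉ A, the maximum number of pairwise edge-disjoint paths from A to t equals the minimum number of edges whose removal disconnects every vertex of A from t. -/
/-- `p` is a (nonempty) directed path from some vertex of `A` to `t`, in the
directed multigraph given by the tail/head maps `tl`, `hd`. -/
def IsPathFrom {V E : Type*} (tl hd : E → V) (A : Set V) (t : V) (p : List E) : Prop :=
  ∃ h : p ≠ [], tl (p.head h) ∈ A ∧ hd (p.getLast h) = t ∧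
    List.Chain' (fun e f => hd e = tl f) p

/-- `maxflow tl hd A t` : the maximum number of pairwise edge-disjoint paths from
vertices of `A` to `t`. -/
noncomputable def maxflow {V E : Type*} (tl hd : E → V) (A : Set V) (t : V) : ℕ :=
  sSup {n | ∃ P : Fin n → List E, (∀ i, IsPathFrom tl hd A t (P i)) ∧
    ∀ i j, i ≠ j → ∀ e, e ∈ P i → e ∉ P j}

/-- `C` is an `A`–`t` edge cut: every path from `A` to `t` uses an edge of `C`. -/
def IsEdgeCut {V E : Type*} (tl hd : E → V) (A : Set V) (t : V) (C : Finset E) : Prop :=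
  ∀ p : List E, IsPathFrom tl hd A t p → ∃ e ∈ C, e ∈ p

namespace MengerAux

open scoped Classical

variable {V E : Type*} (tl hd : E → V)

/-! ### Walks -/

/-- `Wp tl hd x p y` : `p` is a walk from `x` to `y`. -/
def Wp : V → List E → V → Prop
  | x, [], y => x = y
  | x, e :: p, y => tl e = x ∧ Wp (hd e) p y

@[simp] lemma wp_nil {x y : V} : Wp tl hd x ([] : List E) y ↔ x = y := Iff.rfl

@[simp] lemma wp_cons {x y : V} {e : E} {p : List E} :
    Wp tl hd x (e :: p) y ↔ tl e = x ∧ Wp tl hd (hd e) p y := Iff.rfl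

lemma Wp.append {x y z : V} {p q : List E} (hp : Wp tl hd x p y) (hq : Wp tl hd y q z) :
    Wp tl hd x (p ++ q) z := by
  induction p generalizing x with
  | nil => cases hp; simpa using hq
  | cons e p ih => exact ⟨hp.1, ih hp.2⟩

lemma wp_append_split {x z : V} {p q : List E} (h : Wp tl hd x (p ++ q) z) :
    ∃ y, Wp tl hd x p y ∧ Wp tl hd y q z := by
  induction p generalizing x with
  | nil => exact ⟨x, rfl, h⟩
  | cons e p ih =>
    obtain ⟨y, h1, h2⟩ := ih h.2
    exact ⟨y, ⟨h.1, h1⟩, h2⟩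

lemma wp_data {a t : V} {p : List E} (h : Wp tl hd a p t) (hne : p ≠ []) :
    tl (p.head hne) = a ∧ hd (p.getLast hne) = t ∧
      List.Chain' (fun e f => hd e = tl f) p := by
  induction p generalizing a with
  | nil => exact absurd rfl hne
  | cons e p ih =>
    obtain ⟨h1, h2⟩ := h
    cases p with
    | nil => exact ⟨h1, by simpa using h2, List.isChain_singleton _⟩
    | cons f q =>
      obtain ⟨hh, hl, hc⟩ := ih h2 (by simp)
      exact ⟨h1, by simpa [List.getLast_cons] using hl,
        List.isChain_cons_cons.2 ⟨hh.symm, hc⟩⟩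

lemma isPathFrom_of_wp {A : Set V} {t a : V} {p : List E} (ha : a ∈ A)
    (h : Wp tl hd a p t) (hne : p ≠ []) : IsPathFrom tl hd A t p := by
  obtain ⟨h1, h2, h3⟩ := wp_data tl hd h hne
  exact ⟨hne, h1 ▸ ha, h2, h3⟩

lemma wp_of_isPathFrom {A : Set V} {t : V} {p : List E} (h : IsPathFrom tl hd A t p) :
    ∃ a ∈ A, Wp tl hd a p t ∧ p ≠ [] := by
  obtain ⟨hne, ha, hl, hc⟩ := h
  refine ⟨tl (p.head hne), ha, ?_, hne⟩
  clear ha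
  induction p with
  | nil => exact absurd rfl hne
  | cons e p ih =>
    refine ⟨by simp, ?_⟩
    cases p with
    | nil => simpa using hl
    | cons f q =>
      have hc' := hc
      replace hc' := List.isChain_cons_cons.1 hc'
      have := ih (by simp) (by simpa [List.getLast_cons] using hl) hc'.2
      simpa [hc'.1] using this

/-! ### Counting -/

/-- number of edges of `F` with `hd`-value `v` (also used with `tl` for out-degree). -/
noncomputable def nin (F : Finset E) (v : V) : ℕ := (F.filter fun e => hd e = v).card

/-- vertex indicator -/
noncomputable def ch (u v : V) : ℤ := if v = u then 1 else 0

@[simp] lemma ch_self (u : V) : ch u u = 1 := by simp [ch]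

lemma ch_ne {u v : V} (h : v ≠ u) : ch u v = 0 := by simp [ch, h]

lemma nin_sum (F : Finset E) (f : E → V) (u : V) :
    (nin f F u : ℤ) = ∑ e ∈ F, ch u (f e) := by
  rw [nin, Finset.card_filter]
  push_cast
  exact Finset.sum_congr rfl fun e _ => by simp [ch]

/-- (integer) excess at a vertex -/
noncomputable def ex (F : Finset E) (u : V) : ℤ :=
  ∑ e ∈ F, (ch u (hd e) - ch u (tl e))

lemma ex_eq (F : Finset E) (u : V) :
    ex tl hd F u = (nin hd F u : ℤ) - nin tl F u := by
  rw [ex, Finset.sum_sub_distrib, nin_sum, nin_sum]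

lemma ex_sdiff {F Q : Finset E} (h : Q ⊆ F) (u : V) :
    ex tl hd (F \ Q) u = ex tl hd F u - ex tl hd Q u := by
  rw [ex, ex, ex, eq_sub_iff_add_eq, Finset.sum_sdiff h]

lemma wp_telescope {x y : V} {p : List E} (h : Wp tl hd x p y) (u : V) :
    ((p.map fun e => ch u (hd e) - ch u (tl e)).sum) = ch u y - ch u x := by
  induction p generalizing x with
  | nil => cases h; simp
  | cons e p ih =>
    obtain ⟨h1, h2⟩ := h
    have := ih h2
    simp only [List.map_cons, List.sum_cons, this, h1]
    ring

lemma ex_toFinset {x y : V} {p : List E} (h : Wp tl hd x p y) (hnd : p.Nodup) (u : V) :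
    ex tl hd p.toFinset u = ch u y - ch u x := by
  rw [ex, List.sum_toFinset _ hnd, wp_telescope tl hd h]

variable (A : Set V) (t : V)

/-! ### Flows -/

/-- `F` is a flow from `A` to `t` -/
def IsFlow (F : Finset E) : Prop :=
  (∀ e ∈ F, tl e ≠ t) ∧ ∀ v, v ∉ A → v ≠ t → nin hd F v = nin tl F v

lemma nin_tl_eq_zero {F : Finset E} (hF : ∀ e ∈ F, tl e ≠ t) : nin tl F t = 0 := by
  rw [nin, Finset.card_eq_zero, Finset.filter_eq_empty_iff]
  exact hF

lemma ex_t {F : Finset E} (hF : ∀ e ∈ F, tl e ≠ t) :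
    ex tl hd F t = nin hd F t := by
  rw [ex_eq, nin_tl_eq_zero tl t hF]; ring

/-- At a non-source vertex `x` on a partial walk inside a flow `F`, there is an unused
edge of `F` entering `x`. -/
lemma exists_new_edge {F : Finset E} (hF : IsFlow tl hd A t F) (p : List E) (x : V)
    (hw : Wp tl hd x p t) (hne : p ≠ []) (hnd : p.Nodup) (hsub : ∀ e ∈ p, e ∈ F)
    (hxA : x ∉ A) : ∃ g, g ∈ F ∧ hd g = x ∧ g ∉ p := by
  have hxt : x ≠ t := by
    cases p with
    | nil => exact absurd rfl hne
    | cons e p' => exact hw.1 ▸ hF.1 e (hsub e (List.mem_cons_self))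
  have hexp : ex tl hd p.toFinset x = -1 := by
    rw [ex_toFinset tl hd hw hnd, ch_ne (Ne.symm hxt), ch_self]; ring
  have hsubF : p.toFinset ⊆ F := fun e he => hsub e (List.mem_toFinset.1 he)
  have h1 : (nin hd p.toFinset x : ℤ) + 1 = nin tl p.toFinset x := by
    have := ex_eq tl hd p.toFinset x
    rw [hexp] at this; omega
  have h2 : nin tl p.toFinset x ≤ nin tl F x :=
    Finset.card_le_card (Finset.filter_subset_filter _ hsubF)
  have h3 : nin hd F x = nin tl F x := hF.2 x hxA hxt
  have hlt : nin hd p.toFinset x < nin hd F x := by omega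
  by_contra hc
  push_neg at hc
  have hss : F.filter (fun e => hd e = x) ⊆ p.toFinset.filter (fun e => hd e = x) := by
    intro g hg
    rw [Finset.mem_filter] at hg ⊢
    exact ⟨List.mem_toFinset.2 (hc g hg.1 hg.2), hg.2⟩
  exact absurd (Finset.card_le_card hss) (by rw [← nin, ← nin] at *; omega)

/-- Backward tracing: a partial walk entirely inside a flow can be completed to a
walk starting in `A`. -/
lemma trace {F : Finset E} (hF : IsFlow tl hd A t F) :
    ∀ (n : ℕ) (p : List E) (x : V), Wp tl hd x p t → p ≠ [] → p.Nodup →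
      (∀ e ∈ p, e ∈ F) → F.card - p.length ≤ n →
      ∃ a ∈ A, ∃ q : List E, Wp tl hd a q t ∧ q ≠ [] ∧ q.Nodup ∧ ∀ e ∈ q, e ∈ F := by
  intro n
  induction n with
  | zero =>
    intro p x hw hne hnd hsub hcard
    by_cases hxA : x ∈ A
    · exact ⟨x, hxA, p, hw, hne, hnd, hsub⟩
    exfalso
    -- find a new edge g into x, contradiction with cardinality
    obtain ⟨g, hgF, hgx, hgp⟩ := exists_new_edge tl hd A t hF p x hw hne hnd hsub hxA
    have hsub' : insert g p.toFinset ⊆ F := by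
      intro e he
      rcases Finset.mem_insert.1 he with rfl | he
      · exact hgF
      · exact hsub e (List.mem_toFinset.1 he)
    have h1 : p.length + 1 ≤ F.card := by
      have := Finset.card_le_card hsub'
      rwa [Finset.card_insert_of_notMem (fun hc => hgp (List.mem_toFinset.1 hc)),
        List.toFinset_card_of_nodup hnd] at this
    omega
  | succ n ih =>
    intro p x hw hne hnd hsub hcard
    by_cases hxA : x ∈ A
    · exact ⟨x, hxA, p, hw, hne, hnd, hsub⟩
    obtain ⟨g, hgF, hgx, hgp⟩ := exists_new_edge tl hd A t hF p x hw hne hnd hsub hxA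
    have h1 : p.length + 1 ≤ F.card := by
      have hsub' : insert g p.toFinset ⊆ F := by
        intro e he
        rcases Finset.mem_insert.1 he with rfl | he
        · exact hgF
        · exact hsub e (List.mem_toFinset.1 he)
      have := Finset.card_le_card hsub'
      rwa [Finset.card_insert_of_notMem (fun hc => hgp (List.mem_toFinset.1 hc)),
        List.toFinset_card_of_nodup hnd] at this
    refine ih (g :: p) (tl g) ⟨rfl, hgx ▸ hw⟩ (by simp) (List.nodup_cons.2 ⟨hgp, hnd⟩)
      ?_ (by simp; omega)
    intro e he
    rcases List.mem_cons.1 he with rfl | he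
    · exact hgF
    · exact hsub e he


/-- Path decomposition: a flow of value `n` yields `n` pairwise edge-disjoint paths. -/
lemma decomp (ht : t ∉ A) : ∀ (m : ℕ) (F : Finset E), F.card ≤ m → IsFlow tl hd A t F →
    ∃ L : List (List E), L.length = nin hd F t ∧ (∀ p ∈ L, IsPathFrom tl hd A t p) ∧
      (∀ p ∈ L, ∀ e ∈ p, e ∈ F) ∧ L.Pairwise (fun p q => ∀ e, e ∈ p → e ∉ q) := by
  intro m
  induction m with
  | zero =>
    intro F hcard hF
    have : F = ∅ := Finset.card_eq_zero.1 (Nat.le_zero.1 hcard)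
    subst this
    exact ⟨[], by simp [nin], by simp, by simp, by simp⟩
  | succ m ih =>
    intro F hcard hF
    by_cases h0 : nin hd F t = 0
    · exact ⟨[], by simp [h0], by simp, by simp, by simp⟩
    obtain ⟨e₀, he₀⟩ := Finset.card_ne_zero.1 h0
    rw [Finset.mem_filter] at he₀
    obtain ⟨a, ha, q, hwq, hqne, hqnd, hqF⟩ :=
      trace tl hd A t hF F.card [e₀] (tl e₀) ⟨rfl, he₀.2⟩ (by simp) (by simp)
        (by simpa using he₀.1) (by omega)
    have hqsub : q.toFinset ⊆ F := fun e he => hqF e (List.mem_toFinset.1 he)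
    have hat : a ≠ t := fun h => ht (h ▸ ha)
    have exq : ∀ u, ex tl hd q.toFinset u = ch u t - ch u a :=
      fun u => ex_toFinset tl hd hwq hqnd u
    set F' := F \ q.toFinset with hF'
    have hF'1 : ∀ e ∈ F', tl e ≠ t := fun e he => hF.1 e (Finset.mem_sdiff.1 he).1
    have hexF' : ∀ u, ex tl hd F' u = ex tl hd F u - (ch u t - ch u a) := by
      intro u; rw [hF', ex_sdiff tl hd hqsub, exq]
    have hF'flow : IsFlow tl hd A t F' := by
      refine ⟨hF'1, fun v hvA hvt => ?_⟩
      have h1 : ex tl hd F v = 0 := by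
        rw [ex_eq, hF.2 v hvA hvt]; ring
      have h2 : ex tl hd F' v = 0 := by
        rw [hexF', h1, ch_ne (Ne.symm hvt), ch_ne (by rintro rfl; exact hvA ha)]; ring
      have := ex_eq tl hd F' v
      rw [h2] at this
      omega
    have hval : (nin hd F' t : ℤ) = (nin hd F t : ℤ) - 1 := by
      have h2 := hexF' t
      rw [ex_t tl hd t hF.1, ex_t tl hd t hF'1, ch_self, ch_ne hat] at h2
      omega
    have hcard' : F'.card ≤ m := by
      have hqFne : q.toFinset.Nonempty := by
        cases q with
        | nil => exact absurd rfl hqne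
        | cons e q' => exact ⟨e, by simp⟩
      have := Finset.card_lt_card (Finset.sdiff_ssubset hqsub hqFne)
      rw [← hF'] at this
      omega
    obtain ⟨L', hL'len, hL'path, hL'mem, hL'pw⟩ := ih F' hcard' hF'flow
    refine ⟨q :: L', ?_, ?_, ?_, ?_⟩
    · simp only [List.length_cons, hL'len]; omega
    · intro p hp
      rcases List.mem_cons.1 hp with rfl | hp
      · exact isPathFrom_of_wp tl hd ha hwq hqne
      · exact hL'path p hp
    · intro p hp e he
      rcases List.mem_cons.1 hp with rfl | hp
      · exact hqF e he
      · exact (Finset.mem_sdiff.1 (hL'mem p hp e he)).1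
    · refine List.pairwise_cons.2 ⟨fun p hp e heq hep => ?_, hL'pw⟩
      exact (Finset.mem_sdiff.1 (hL'mem p hp e hep)).2 (List.mem_toFinset.2 heq)

/-! ### Residual reachability and augmentation -/

/-- source of a residual step -/
def src (s : E × Bool) : V := if s.2 then tl s.1 else hd s.1

/-- destination of a residual step -/
def dst (s : E × Bool) : V := if s.2 then hd s.1 else tl s.1

/-- a residual step is valid for `F` -/
def Valid (F : Finset E) (s : E × Bool) : Prop :=
  if s.2 then s.1 ∉ F ∧ tl s.1 ≠ t else s.1 ∈ F

/-- residual reachability from `A` -/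
inductive Reach (F : Finset E) : V → Prop
  | base {v : V} : v ∈ A → Reach F v
  | fwd {e : E} : e ∉ F → tl e ≠ t → Reach F (tl e) → Reach F (hd e)
  | bwd {e : E} : e ∈ F → Reach F (hd e) → Reach F (tl e)

lemma reach_walk {F : Finset E} {v : V} (h : Reach tl hd A t F v) :
    ∃ a ∈ A, ∃ w : List (E × Bool), Wp (src tl hd) (dst tl hd) a w v ∧
      ∀ s ∈ w, Valid tl t F s := by
  induction h with
  | base hv => exact ⟨_, hv, [], rfl, by simp⟩
  | @fwd e he het _ ih =>
    obtain ⟨a, ha, w, hw, hv⟩ := ih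
    refine ⟨a, ha, w ++ [(e, true)], hw.append _ _ (by refine ⟨by simp [src], ?_⟩; show dst tl hd _ = _; simp [dst]), ?_⟩
    intro s hs
    rcases List.mem_append.1 hs with hs | hs
    · exact hv s hs
    · simp at hs; subst hs; exact by simp [Valid, he, het]
  | @bwd e he _ ih =>
    obtain ⟨a, ha, w, hw, hv⟩ := ih
    refine ⟨a, ha, w ++ [(e, false)], hw.append _ _ (by refine ⟨by simp [src], ?_⟩; show dst tl hd _ = _; simp [dst]), ?_⟩
    intro s hs
    rcases List.mem_append.1 hs with hs | hs
    · exact hv s hs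
    · simp at hs; subst hs; exact by simp [Valid, he]

/-- split a list at a duplicated image -/
lemma exists_dup_split {α β : Type*} (f : α → β) :
    ∀ {l : List α}, ¬ (l.map f).Nodup →
      ∃ (l₁ : List α) (x : α) (l₂ : List α) (y : α) (l₃ : List α),
        l = l₁ ++ x :: l₂ ++ y :: l₃ ∧ f x = f y := by
  intro l
  induction l with
  | nil => intro h; simp at h
  | cons a l ih =>
    intro h
    rw [List.map_cons, List.nodup_cons] at h
    push_neg at h
    by_cases h1 : f a ∈ l.map f
    · obtain ⟨y, hy, hfy⟩ := List.mem_map.1 h1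
      obtain ⟨s, u, rfl⟩ := List.append_of_mem hy
      exact ⟨[], a, s, y, u, by simp, hfy.symm⟩
    · obtain ⟨l₁, x, l₂, y, l₃, rfl, hxy⟩ := ih (h h1)
      exact ⟨a :: l₁, x, l₂, y, l₃, by simp, hxy⟩

lemma src_dst_swap {s s' : E × Bool} (h1 : s.1 = s'.1) (h2 : s.2 ≠ s'.2) :
    src tl hd s = dst tl hd s' ∧ dst tl hd s = src tl hd s' := by
  obtain ⟨e, b⟩ := s; obtain ⟨e', b'⟩ := s'
  cases h1
  cases b <;> cases b' <;> simp_all [src, dst]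

/-- a shortest residual walk has no repeated edges -/
lemma nodup_walk {F : Finset E} :
    ∀ (n : ℕ) (w : List (E × Bool)) (a : V), a ∈ A →
      Wp (src tl hd) (dst tl hd) a w t → (∀ s ∈ w, Valid tl t F s) → w.length ≤ n →
      ∃ a' ∈ A, ∃ w' : List (E × Bool), Wp (src tl hd) (dst tl hd) a' w' t ∧
        (∀ s ∈ w', Valid tl t F s) ∧ (w'.map Prod.fst).Nodup := by
  intro n
  induction n with
  | zero =>
    intro w a ha hw hv hlen
    rw [Nat.le_zero, List.length_eq_zero_iff] at hlen
    subst hlen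
    exact ⟨a, ha, [], hw, by simp, by simp⟩
  | succ n ih =>
    intro w a ha hw hv hlen
    by_cases hnd : (w.map Prod.fst).Nodup
    · exact ⟨a, ha, w, hw, hv, hnd⟩
    obtain ⟨w₁, s, w₂, s', w₃, rfl, hss⟩ := exists_dup_split Prod.fst hnd
    obtain ⟨z₂, hPre, hTail⟩ := wp_append_split _ _ hw
    obtain ⟨hsrc', hw₃⟩ := hTail
    obtain ⟨z₁, hw₁, hMid⟩ := wp_append_split _ _ hPre
    obtain ⟨hsrc, hw₂⟩ := hMid
    by_cases hb : s.2 = s'.2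
    · have hs : s = s' := Prod.ext hss hb
      subst hs
      refine ih (w₁ ++ s :: w₃) a ha (hw₁.append _ _ ⟨hsrc, hw₃⟩) ?_ ?_
      · intro u hu; apply hv u; simp at hu ⊢; tauto
      · simp at hlen ⊢; omega
    · obtain ⟨he1, he2⟩ := src_dst_swap tl hd hss hb
      have hw₃' : Wp (src tl hd) (dst tl hd) z₁ w₃ t := by
        rw [← hsrc, he1]; exact hw₃
      refine ih (w₁ ++ w₃) a ha (hw₁.append _ _ hw₃') ?_ ?_
      · intro u hu; apply hv u; simp at hu ⊢; tauto
      · simp at hlen ⊢; omega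

/-- augment along one residual step -/
noncomputable def stepAug (F : Finset E) (s : E × Bool) : Finset E :=
  if s.2 then insert s.1 F else F.erase s.1

lemma ex_stepAug {G : Finset E} {s : E × Bool}
    (hm : if s.2 then s.1 ∉ G else s.1 ∈ G) (u : V) :
    ex tl hd (stepAug G s) u = ex tl hd G u + ch u (dst tl hd s) - ch u (src tl hd s) := by
  by_cases hb : s.2
  · rw [stepAug, if_pos hb, ex, Finset.sum_insert (by simpa [hb] using hm), ← ex]
    simp [dst, src, hb]; ring
  · rw [stepAug, if_neg hb, ex, ex, Finset.sum_erase_eq_sub (by simpa [hb] using hm)]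
    simp [dst, src, hb]; ring

lemma mem_stepAug_iff {G : Finset E} {s : E × Bool} {e : E} (h : e ≠ s.1) :
    (e ∈ stepAug G s ↔ e ∈ G) := by
  by_cases hb : s.2 <;> simp [stepAug, hb, h, Finset.mem_erase, Finset.mem_insert]

lemma stepAug_tl {G : Finset E} {s : E × Bool} (hG : ∀ e ∈ G, tl e ≠ t)
    (hs : s.2 → tl s.1 ≠ t) : ∀ e ∈ stepAug G s, tl e ≠ t := by
  intro e he
  by_cases hb : s.2
  · rw [stepAug, if_pos hb] at he
    rcases Finset.mem_insert.1 he with rfl | he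
    · exact hs hb
    · exact hG e he
  · rw [stepAug, if_neg hb] at he
    exact hG e (Finset.mem_erase.1 he).2

/-- augmenting along a residual walk with distinct edges -/
lemma walk_aug {F : Finset E} :
    ∀ (w : List (E × Bool)) (x y : V) (G : Finset E),
      Wp (src tl hd) (dst tl hd) x w y → (∀ s ∈ w, Valid tl t F s) →
      (w.map Prod.fst).Nodup → (∀ s ∈ w, (s.1 ∈ G ↔ s.1 ∈ F)) →
      (∀ e ∈ G, tl e ≠ t) →
      ∃ G' : Finset E, (∀ e ∈ G', tl e ≠ t) ∧
        ∀ u, ex tl hd G' u = ex tl hd G u + ch u y - ch u x := by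
  intro w
  induction w with
  | nil =>
    intro x y G hw _ _ _ hGt
    exact ⟨G, hGt, fun u => by cases hw; ring⟩
  | cons s w ih =>
    intro x y G hw hv hnd hag hGt
    obtain ⟨hsrc, hw'⟩ := hw
    have hvs : Valid tl t F s := hv s (List.mem_cons_self)
    have hms : if s.2 then s.1 ∉ G else s.1 ∈ G := by
      by_cases hb : s.2
      · rw [if_pos hb]
        rw [Valid, if_pos hb] at hvs
        exact fun hc => hvs.1 (((hag s (List.mem_cons_self))).1 hc)
      · rw [if_neg hb]
        rw [Valid, if_neg hb] at hvs
        exact (hag s (List.mem_cons_self)).2 hvs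
    rw [List.map_cons, List.nodup_cons] at hnd
    have hnd' : (w.map Prod.fst).Nodup := hnd.2
    have hne : ∀ u ∈ w, u.1 ≠ s.1 := by
      intro u hu hc
      exact hnd.1 (hc ▸ List.mem_map_of_mem (f := Prod.fst) hu)
    have hag' : ∀ u ∈ w, (u.1 ∈ stepAug G s ↔ u.1 ∈ F) := by
      intro u hu
      rw [mem_stepAug_iff (hne u hu)]
      exact hag u (List.mem_cons_of_mem _ hu)
    have hGt' : ∀ e ∈ stepAug G s, tl e ≠ t := by
      refine stepAug_tl tl t hGt (fun hb => ?_)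
      rw [Valid, if_pos hb] at hvs
      exact hvs.2
    obtain ⟨G', hG't, hG'ex⟩ := ih (dst tl hd s) y (stepAug G s) hw'
      (fun u hu => hv u (List.mem_cons_of_mem _ hu)) hnd' hag' hGt'
    refine ⟨G', hG't, fun u => ?_⟩
    rw [hG'ex u, ex_stepAug tl hd hms, hsrc]
    ring

/-- a maximum flow admits no residual path to `t` -/
lemma no_reach_of_max (ht : t ∉ A) {F : Finset E} (hF : IsFlow tl hd A t F)
    (hmax : ∀ G : Finset E, IsFlow tl hd A t G → nin hd G t ≤ nin hd F t) :
    ¬ Reach tl hd A t F t := by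
  intro hr
  obtain ⟨a, ha, w, hw, hv⟩ := reach_walk tl hd A t hr
  obtain ⟨a', ha', w', hw', hv', hnd'⟩ :=
    nodup_walk tl hd A t w.length w a ha hw hv le_rfl
  obtain ⟨G', hG't, hG'ex⟩ :=
    walk_aug tl hd t w' a' t F hw' hv' hnd' (fun _ _ => Iff.rfl) hF.1
  have ha't : a' ≠ t := fun h => ht (h ▸ ha')
  have hflow' : IsFlow tl hd A t G' := by
    refine ⟨hG't, fun v hvA hvt => ?_⟩
    have h1 : ex tl hd F v = 0 := by rw [ex_eq, hF.2 v hvA hvt]; ring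
    have h2 : ex tl hd G' v = 0 := by
      rw [hG'ex v, h1, ch_ne (Ne.symm hvt), ch_ne (by rintro rfl; exact hvA ha')]
      ring
    have := ex_eq tl hd G' v
    rw [h2] at this
    omega
  have hval : (nin hd G' t : ℤ) = nin hd F t + 1 := by
    have := hG'ex t
    rw [ex_t tl hd t hF.1, ex_t tl hd t hG't, ch_self, ch_ne ha't] at this
    omega
  have := hmax G' hflow'
  omega

/-- truncate a walk at its first arrival at `t` -/
lemma trunc : ∀ (p : List E) (x : V), Wp tl hd x p t → x ≠ t → p ≠ [] →
    ∃ p' : List E, Wp tl hd x p' t ∧ p' ≠ [] ∧ (∀ e ∈ p', e ∈ p) ∧ ∀ e ∈ p', tl e ≠ t := by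
  intro p
  induction p with
  | nil => intro x _ _ h; exact absurd rfl h
  | cons e p ih =>
    intro x hw hxt _
    obtain ⟨h1, h2⟩ := hw
    by_cases het : hd e = t
    · refine ⟨[e], ⟨h1, het⟩, by simp, by simp, ?_⟩
      intro f hf
      rw [List.mem_singleton] at hf
      subst hf
      exact h1 ▸ hxt
    · have hpne : p ≠ [] := by
        rintro rfl
        exact het h2
      obtain ⟨p', hwp', hp'ne, hp'sub, hp'tl⟩ := ih (hd e) h2 het hpne
      refine ⟨e :: p', ⟨h1, hwp'⟩, by simp, ?_, ?_⟩
      · intro f hf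
        rcases List.mem_cons.1 hf with rfl | hf
        · exact List.mem_cons_self
        · exact List.mem_cons_of_mem _ (hp'sub f hf)
      · intro f hf
        rcases List.mem_cons.1 hf with rfl | hf
        · exact h1 ▸ hxt
        · exact hp'tl f hf

/-- a walk from a reachable vertex to an unreachable one crosses -/
lemma cross {F : Finset E} : ∀ (p : List E) (x y : V), Wp tl hd x p y →
    Reach tl hd A t F x → ¬ Reach tl hd A t F y →
    ∃ e ∈ p, Reach tl hd A t F (tl e) ∧ ¬ Reach tl hd A t F (hd e) := by
  intro p
  induction p with
  | nil =>
    intro x y hw hx hy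
    cases hw
    exact absurd hx hy
  | cons e p ih =>
    intro x y hw hx hy
    obtain ⟨h1, h2⟩ := hw
    by_cases hre : Reach tl hd A t F (hd e)
    · obtain ⟨f, hf, hf1, hf2⟩ := ih (hd e) y h2 hre hy
      exact ⟨f, List.mem_cons_of_mem _ hf, hf1, hf2⟩
    · exact ⟨e, List.mem_cons_self, h1 ▸ hx, hre⟩

/-- a maximum flow yields a cut of the same size -/
lemma cut_of_max (ht : t ∉ A) {F : Finset E} (hF : IsFlow tl hd A t F)
    (hnr : ¬ Reach tl hd A t F t) :
    ∃ C : Finset E, IsEdgeCut tl hd A t C ∧ C.card = nin hd F t := by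
  set R := Reach tl hd A t F with hR
  set C := F.filter (fun e => R (tl e) ∧ ¬ R (hd e)) with hC
  have hbwd : ∀ e ∈ F, R (hd e) → R (tl e) := fun e he h => Reach.bwd he h
  refine ⟨C, ?_, ?_⟩
  · -- C is a cut
    intro p hp
    obtain ⟨a, ha, hwp, hpne⟩ := wp_of_isPathFrom tl hd hp
    have hat : a ≠ t := fun h => ht (h ▸ ha)
    -- truncate at the first arrival at t
    obtain ⟨p', hwp', hp'ne, hp'sub, hp'tl⟩ := trunc tl hd t p a hwp hat hpne
    -- find a crossing edge
    obtain ⟨e, hep, hetl, hehd⟩ := cross tl hd A t p' a t hwp' (Reach.base ha) hnr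
    have heF : e ∈ F := by
      by_contra hc
      exact hehd (Reach.fwd hc (hp'tl e hep) hetl)
    exact ⟨e, Finset.mem_filter.2 ⟨heF, hetl, hehd⟩, hp'sub e hep⟩
  · -- |C| = value
    have key : ∀ e ∈ F, (if R (tl e) ∧ ¬ R (hd e) then (1:ℤ) else 0) =
        (if R (hd e) then (0:ℤ) else 1) - (if R (tl e) then (0:ℤ) else 1) := by
      intro e he
      by_cases h1 : R (tl e)
      · by_cases h2 : R (hd e) <;> simp [h1, h2]
      · have h2 : ¬ R (hd e) := fun h => h1 (hbwd e he h)
        simp [h1, h2]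
    set B := F.image hd ∪ F.image tl with hB
    have fib : ∀ (f : E → V), (∀ e ∈ F, f e ∈ B) →
        ∑ e ∈ F, (if R (f e) then (0:ℤ) else 1) =
          ∑ v ∈ B, (if R v then (0:ℤ) else 1) * nin f F v := by
      intro f hmaps
      rw [← Finset.sum_fiberwise_of_maps_to hmaps (fun e => if R (f e) then (0:ℤ) else 1)]
      refine Finset.sum_congr rfl fun v hv => ?_
      rw [Finset.sum_congr rfl (fun e he => by
        rw [(Finset.mem_filter.1 he).2]), Finset.sum_const, nin]
      ring
    have hcast : (C.card : ℤ) = ∑ e ∈ F, (if R (tl e) ∧ ¬ R (hd e) then (1:ℤ) else 0) := by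
      rw [hC, Finset.card_filter]
      push_cast
      rfl
    have hsum : (C.card : ℤ) = ∑ v ∈ B, (if R v then (0:ℤ) else 1) * ex tl hd F v := by
      rw [hcast, Finset.sum_congr rfl key, Finset.sum_sub_distrib,
        fib hd (fun e he => Finset.mem_union_left _ (Finset.mem_image_of_mem hd he)),
        fib tl (fun e he => Finset.mem_union_right _ (Finset.mem_image_of_mem tl he)),
        ← Finset.sum_sub_distrib]
      refine Finset.sum_congr rfl fun v _ => ?_
      rw [ex_eq]
      ring
    have heval : (C.card : ℤ) = (if R t then (0:ℤ) else 1) * ex tl hd F t := by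
      rw [hsum]
      refine Finset.sum_eq_single t (fun v hv hvt => ?_) (fun hins => ?_)
      · by_cases hvA : v ∈ A
        · simp [hR, Reach.base hvA]
        · have : ex tl hd F v = 0 := by rw [ex_eq, hF.2 v hvA hvt]; ring
          rw [this]; ring
      · have h0 : nin hd F t = 0 := by
          rw [nin, Finset.card_eq_zero, Finset.filter_eq_empty_iff]
          intro e he hc
          exact hins (Finset.mem_union_left _ (Finset.mem_image.2 ⟨e, he, hc⟩))
        rw [ex_t tl hd t hF.1, h0]
        ring
    have : (C.card : ℤ) = nin hd F t := by
      rw [heval, if_neg hnr, ex_t tl hd t hF.1]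
      ring
    exact_mod_cast this


lemma exists_max_flow [Fintype E] : ∃ F : Finset E, IsFlow tl hd A t F ∧
    ∀ G : Finset E, IsFlow tl hd A t G → nin hd G t ≤ nin hd F t := by
  have hne : (Finset.univ.filter (fun F : Finset E => IsFlow tl hd A t F)).Nonempty := by
    refine ⟨∅, Finset.mem_filter.2 ⟨Finset.mem_univ _, by simp, fun v _ _ => by simp [nin]⟩⟩
  obtain ⟨F, hF, hmax⟩ := Finset.exists_max_image _ (fun F => nin hd F t) hne
  exact ⟨F, (Finset.mem_filter.1 hF).2,
    fun G hG => hmax G (Finset.mem_filter.2 ⟨Finset.mem_univ _, hG⟩)⟩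

lemma flow_le_cut {m : ℕ} {C : Finset E}
    (hm : ∃ P : Fin m → List E, (∀ i, IsPathFrom tl hd A t (P i)) ∧
      ∀ i j, i ≠ j → ∀ e, e ∈ P i → e ∉ P j)
    (hC : IsEdgeCut tl hd A t C) : m ≤ C.card := by
  obtain ⟨P, hP, hdisj⟩ := hm
  have hch : ∀ i : Fin m, ∃ e, e ∈ C ∧ e ∈ P i := by
    intro i
    obtain ⟨e, he1, he2⟩ := hC (P i) (hP i)
    exact ⟨e, he1, he2⟩
  choose f hfC hfP using hch
  have hinj : Function.Injective f := by
    intro i j hij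
    by_contra hne
    exact (hdisj i j hne (f i) (hfP i)) (hij ▸ hfP j)
  calc m = (Finset.univ : Finset (Fin m)).card := by simp
  _ ≤ C.card := Finset.card_le_card_of_injOn f (fun i _ => hfC i) hinj.injOn

lemma mem_flowset_of_flow (ht : t ∉ A) [Fintype E] {F : Finset E}
    (hF : IsFlow tl hd A t F) :
    ∃ P : Fin (nin hd F t) → List E, (∀ i, IsPathFrom tl hd A t (P i)) ∧
      ∀ i j, i ≠ j → ∀ e, e ∈ P i → e ∉ P j := by
  obtain ⟨L, hlen, hpath, _, hpw⟩ := decomp tl hd A t ht F.card F le_rfl hF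
  refine ⟨fun i => L.get (Fin.cast hlen.symm i), fun i => hpath _ (L.get_mem _), ?_⟩
  intro i j hij e hei hej
  have hne : (Fin.cast hlen.symm i) ≠ (Fin.cast hlen.symm j) := by
    simpa [Fin.ext_iff] using (Fin.val_ne_of_ne hij)
  rcases lt_or_gt_of_ne hne with h | h
  · exact (List.pairwise_iff_get.1 hpw _ _ h) e hei hej
  · exact (List.pairwise_iff_get.1 hpw _ _ h) e hej hei

end MengerAux

/-- Menger / maxflow–mincut, edge version -/
theorem stmt11 {V E : Type*} [Fintype E] (tl hd : E → V) (A : Set V) (t : V)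
    (ht : t ∉ A) :
    maxflow tl hd A t =
      sInf {n | ∃ C : Finset E, IsEdgeCut tl hd A t C ∧ C.card = n} := by
  classical
  open MengerAux in
  have h0S : ∃ P : Fin 0 → List E, (∀ i, IsPathFrom tl hd A t (P i)) ∧
      ∀ i j, i ≠ j → ∀ e, e ∈ P i → e ∉ P j :=
    ⟨Fin.elim0, fun i => i.elim0, fun i => i.elim0⟩
  have hcutuniv : IsEdgeCut tl hd A t (Finset.univ : Finset E) := by
    intro p hp
    obtain ⟨h, _⟩ := hp
    exact ⟨p.head h, Finset.mem_univ _, List.head_mem h⟩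
  have hbdd : BddAbove {n | ∃ P : Fin n → List E, (∀ i, IsPathFrom tl hd A t (P i)) ∧
      ∀ i j, i ≠ j → ∀ e, e ∈ P i → e ∉ P j} := by
    refine ⟨(Finset.univ : Finset E).card, fun m hm => ?_⟩
    exact MengerAux.flow_le_cut tl hd A t hm hcutuniv
  obtain ⟨F, hF, hmax⟩ := MengerAux.exists_max_flow tl hd A t
  have hnr := MengerAux.no_reach_of_max tl hd A t ht hF hmax
  obtain ⟨C, hC, hCcard⟩ := MengerAux.cut_of_max tl hd A t ht hF hnr
  have hnS := MengerAux.mem_flowset_of_flow tl hd A t ht hF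
  refine le_antisymm ?_ ?_
  · refine le_csInf ⟨(Finset.univ : Finset E).card, Finset.univ, hcutuniv, rfl⟩ ?_
    rintro c ⟨D, hD, rfl⟩
    exact csSup_le ⟨0, h0S⟩ (fun m hm => MengerAux.flow_le_cut tl hd A t hm hD)
  · calc sInf {n | ∃ C : Finset E, IsEdgeCut tl hd A t C ∧ C.card = n}
        ≤ MengerAux.nin hd F t := Nat.sInf_le ⟨C, hC, hCcard⟩
    _ ≤ maxflow tl hd A t := le_csSup hbdd hnS
end

section
/- Let ψ : E → F^r be a linear network code on a DAG G, S₁ ⊆ S a subset of sources, U₁ the span of the unit vectors b_{i,j} for sᵢ ∈ S₁, and U₂ the span of the remaining unit vectors. If (V_S, V_T) is an S₁–t edge cut with cut edge set C, then for every edge e with head(e) = t, the U₁-component ψ(e)|_{U₁} lies in span{ψ(e')|_{U₁} : e' ∈ C}. -/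
/-- Lemma 1 of the paper.  `ψ` is a linear network code on a finite DAG:
the `j`-th source edge `ι j` (belonging to source `srcOf j`) carries the unit
vector `b_j = Pi.single j 1`, and every non-source edge carries a linear
combination of the vectors on the edges entering its tail.  If `(V_S, V_Sᶜ)` is an
`S₁`–`t` edge cut (all sources of `S₁` lie in `V_S` and `t ∉ V_S`), then for every
edge `e` into `t`, the `U₁`-component of `ψ e` (coordinates `j` with
`srcOf j ∈ S₁`) lies in the span of the `U₁`-components on the cut edges. -/
theorem stmt12 {V E F : Type*} [Fintype E] [Field F] {r m : ℕ}
    (tl hd : E → V)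
    (hacyc : ∀ v : V,
      ¬ Relation.TransGen (fun a b => ∃ e : E, tl e = a ∧ hd e = b) v v)
    (srcOf : Fin r → Fin m) (ι : Fin r → E) (hι : Function.Injective ι)
    (ψ : E → Fin r → F)
    (hψsrc : ∀ j, ψ (ι j) = Pi.single j 1)
    (hψ : ∀ e, e ∉ Set.range ι →
      ψ e ∈ Submodule.span F {x | ∃ e', hd e' = tl e ∧ x = ψ e'})
    (S₁ : Set (Fin m)) [DecidablePred (· ∈ S₁)]
    (t : V) (VS : Set V)
    (hcutS : ∀ j, srcOf j ∈ S₁ → tl (ι j) ∈ VS) (hcutT : t ∉ VS)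
    (e : E) (he : hd e = t) :
    (fun j => if srcOf j ∈ S₁ then ψ e j else 0) ∈
      Submodule.span F
        {x | ∃ e', (tl e' ∈ VS ∧ hd e' ∉ VS) ∧
          x = fun j => if srcOf j ∈ S₁ then ψ e' j else 0} := by
  classical
  set vrel : V → V → Prop := fun a b => ∃ e : E, tl e = a ∧ hd e = b with hvrel
  set erel : E → E → Prop := fun e' e => hd e' = tl e with herel
  -- edge relation is well-founded
  have htg : ∀ a b : E, Relation.TransGen erel a b →
      Relation.TransGen vrel (tl a) (tl b) := by
    intro a b h
    induction h with
    | single h =>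
        exact Relation.TransGen.single ⟨a, rfl, h⟩
    | tail h1 h2 ih =>
        exact ih.tail ⟨_, rfl, h2⟩
  haveI : IsTrans E (Relation.TransGen erel) := inferInstance
  haveI : IsIrrefl E (Relation.TransGen erel) :=
    ⟨fun a h => hacyc (tl a) (htg a a h)⟩
  have hwfT : WellFounded (Relation.TransGen erel) :=
    Finite.wellFounded_of_trans_of_irrefl _
  have hwf : WellFounded erel :=
    Subrelation.wf (fun h => Relation.TransGen.single h) hwfT
  -- projection linear map
  let π : (Fin r → F) →ₗ[F] (Fin r → F) :=
    { toFun := fun x j => if srcOf j ∈ S₁ then x j else 0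
      map_add' := by
        intro x y; funext j; by_cases h : srcOf j ∈ S₁ <;> simp [h]
      map_smul' := by
        intro c x; funext j; by_cases h : srcOf j ∈ S₁ <;> simp [h] }
  have key : ∀ e : E, hd e ∉ VS →
      π (ψ e) ∈ Submodule.span F
        {x | ∃ e', (tl e' ∈ VS ∧ hd e' ∉ VS) ∧
          x = fun j => if srcOf j ∈ S₁ then ψ e' j else 0} := by
    intro e
    induction e using hwf.induction with
    | _ e ih =>
      intro hne
      by_cases htl : tl e ∈ VS
      · exact Submodule.subset_span ⟨e, ⟨htl, hne⟩, rfl⟩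
      · by_cases hsrc : e ∈ Set.range ι
        · obtain ⟨j, rfl⟩ := hsrc
          have hj : srcOf j ∉ S₁ := fun h => htl (hcutS j h)
          have hz : π (ψ (ι j)) = 0 := by
            funext j'
            show (if srcOf j' ∈ S₁ then ψ (ι j) j' else 0) = 0
            by_cases h : srcOf j' ∈ S₁
            · simp only [h, if_true, hψsrc]
              rcases eq_or_ne j' j with rfl | hne'
              · exact absurd h hj
              · simp [Pi.single_apply, hne']
            · simp [h]
          rw [hz]; exact Submodule.zero_mem _
        · have hmem := hψ e hsrc
          have h1 : π (ψ e) ∈ Submodule.span F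
              (π '' {x | ∃ e', hd e' = tl e ∧ x = ψ e'}) :=
            Submodule.apply_mem_span_image_of_mem_span π hmem
          refine Submodule.span_le.2 ?_ h1
          rintro _ ⟨x, ⟨e', he', rfl⟩, rfl⟩
          have hne' : hd e' ∉ VS := by rw [he']; exact htl
          exact ih e' he' hne'
  have := key e (by rw [he]; exact hcutT)
  exact this
end

section
/- Let ψ be a linear network code on a DAG. For any vertex t and any vertex set A containing all sources, rank{ψ(e) : head(e) = t} ≤ maxflow(A, t). -/
open scoped Classical

section Aux

variable {V E F : Type*} [Fintype E] [Field F] {r : ℕ}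

lemma le_maxflow_of_paths (tl hd : E → V) (A : Set V) (t : V) {n : ℕ}
    (P : Fin n → List E) (hP : ∀ i, IsPathFrom tl hd A t (P i))
    (hdisj : ∀ i j, i ≠ j → ∀ e, e ∈ P i → e ∉ P j) :
    n ≤ maxflow tl hd A t := by
  apply le_csSup
  · refine ⟨Fintype.card E, ?_⟩
    rintro m ⟨Q, hQ, hQd⟩
    have hinj : Function.Injective (fun i : Fin m => (Q i).head (hQ i).choose) := by
      intro i j hij
      by_contra hne
      have h1 : (Q i).head ((hQ i).choose) = (Q j).head ((hQ j).choose) := hij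
      refine hQd i j hne ((Q i).head ((hQ i).choose)) (List.head_mem ((hQ i).choose)) ?_
      rw [h1]
      exact List.head_mem ((hQ j).choose)
    simpa using Fintype.card_le_of_injective _ hinj
  · exact ⟨P, hP, hdisj⟩

lemma key (tl hd : E → V) (ι : Fin r → E) (ψ : E → Fin r → F)
    (hψ : ∀ e, e ∉ Set.range ι →
      ψ e ∈ Submodule.span F {x | ∃ e', hd e' = tl e ∧ x = ψ e'})
    (A : Set V) (hA : ∀ j, tl (ι j) ∈ A) (t : V)
    (ν : V → ℕ) (hν : ∀ e : E, ν (tl e) < ν (hd e)) :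
    ∀ N : ℕ, ∀ k : ℕ, ∀ e : Fin k → E, ∀ P : Fin k → List E,
      (∑ i, (if e i ∈ Set.range ι then 0 else ν (tl (e i)) + 1)) ≤ N →
      ∀ hPne : ∀ i, P i ≠ [],
      (∀ i, (P i).head (hPne i) = e i) →
      (∀ i, hd ((P i).getLast (hPne i)) = t) →
      (∀ i, List.Chain' (fun a b => hd a = tl b) (P i)) →
      (∀ i j, i ≠ j → ∀ g, g ∈ P i → g ∉ P j) →
      LinearIndependent F (fun i => ψ (e i)) →
      (∀ j, e j ∉ Set.range ι → ∀ i, ∀ g ∈ P i, g ≠ e i → ν (tl (e j)) ≤ ν (tl g)) →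
      k ≤ maxflow tl hd A t := by
  intro N
  induction N with
  | zero =>
      intro k e P hM hPne hPhead hPlast hPchain hdisj hind h4
      have hsrc : ∀ i, e i ∈ Set.range ι := by
        intro i
        by_contra hni
        have := Finset.sum_eq_zero_iff.mp (Nat.le_zero.mp hM) i (Finset.mem_univ i)
        simp [hni] at this
      refine le_maxflow_of_paths tl hd A t P (fun i => ?_) hdisj
      obtain ⟨m, hm⟩ := hsrc i
      exact ⟨hPne i, by rw [hPhead i, ← hm]; exact hA m, hPlast i, hPchain i⟩
  | succ N ih =>
      intro k e P hM hPne hPhead hPlast hPchain hdisj hind h4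
      by_cases hall : ∀ i, e i ∈ Set.range ι
      · refine le_maxflow_of_paths tl hd A t P (fun i => ?_) hdisj
        obtain ⟨m, hm⟩ := hall i
        exact ⟨hPne i, by rw [hPhead i, ← hm]; exact hA m, hPlast i, hPchain i⟩
      · push_neg at hall
        have hNS : (Finset.univ.filter (fun i => e i ∉ Set.range ι)).Nonempty := by
          obtain ⟨i, hi⟩ := hall
          exact ⟨i, Finset.mem_filter.mpr ⟨Finset.mem_univ _, hi⟩⟩
        obtain ⟨i0, hi0mem, hi0max⟩ :=
          Finset.exists_max_image _ (fun i => ν (tl (e i))) hNS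
        have hi0 : e i0 ∉ Set.range ι := (Finset.mem_filter.mp hi0mem).2
        have hmax : ∀ j, e j ∉ Set.range ι → ν (tl (e j)) ≤ ν (tl (e i0)) := by
          intro j hj
          exact hi0max j (Finset.mem_filter.mpr ⟨Finset.mem_univ _, hj⟩)
        set T : Submodule F (Fin r → F) :=
          Submodule.span F ((fun j => ψ (e j)) '' {i0}ᶜ) with hT
        have hT0 : ψ (e i0) ∉ T := hind.notMem_span_image (by simp)
        have hex : ∃ f : E, hd f = tl (e i0) ∧ ψ f ∉ T := by
          by_contra hcon
          push_neg at hcon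
          apply hT0
          have hle : Submodule.span F {x | ∃ e', hd e' = tl (e i0) ∧ x = ψ e'} ≤ T := by
            rw [Submodule.span_le]
            rintro x ⟨e', he', rfl⟩
            exact hcon e' he'
          exact hle (hψ (e i0) hi0)
        obtain ⟨f, hf1, hf2⟩ := hex
        -- f is not on any existing path
        have hfP : ∀ i, f ∉ P i := by
          intro i hfPi
          by_cases hfe : f = e i
          · by_cases hii : i = i0
            · subst hii
              have : ν (tl f) < ν (tl f) := by
                have := hν f
                rw [hf1, ← hfe] at this
                exact this
              exact absurd this (lt_irrefl _)
            · exact hf2 (by rw [hfe]; exact Submodule.subset_span ⟨i, by simp [hii], rfl⟩)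
          · have h1 := h4 i0 hi0 i f hfPi hfe
            have h2 : ν (tl f) < ν (tl (e i0)) := by rw [← hf1]; exact hν f
            omega
        -- new state
        set e' : Fin k → E := Function.update e i0 f with he'
        set P' : Fin k → List E := Function.update P i0 (f :: P i0) with hP'
        have hPne' : ∀ i, P' i ≠ [] := by
          intro i
          by_cases hii : i = i0
          · subst hii; simp [hP']
          · simpa [hP', Function.update_of_ne hii] using hPne i
        have hPhead' : ∀ i, (P' i).head (hPne' i) = e' i := by
          intro i
          by_cases hii : i = i0
          · subst hii; simp [hP', he']
          · simp [hP', he', Function.update_of_ne hii, hPhead i]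
        have hPlast' : ∀ i, hd ((P' i).getLast (hPne' i)) = t := by
          intro i
          by_cases hii : i = i0
          · subst hii
            have h2 : (P' i).getLast (hPne' i) = (P i).getLast (hPne i) := by
              simp only [hP', Function.update_self]
              exact List.getLast_cons (hPne i)
            rw [h2]; exact hPlast i
          · simpa [hP', Function.update_of_ne hii] using hPlast i
        have hPchain' : ∀ i, List.Chain' (fun a b => hd a = tl b) (P' i) := by
          intro i
          by_cases hii : i = i0
          · subst hii
            simp only [hP', Function.update_self]
            obtain ⟨x, xs, hx⟩ := List.exists_cons_of_ne_nil (hPne i)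
            rw [hx, List.Chain', List.isChain_cons_cons]
            constructor
            · have hxh : x = e i := by
                have h3 := hPhead i
                simp only [hx] at h3
                simpa using h3
              rw [hxh, hf1]
            · rw [← hx]; exact hPchain i
          · simpa [hP', Function.update_of_ne hii] using hPchain i
        have hdisj' : ∀ i j, i ≠ j → ∀ g, g ∈ P' i → g ∉ P' j := by
          intro i j hij g hgi hgj
          by_cases hii : i = i0
          · subst hii
            rw [hP'] at hgi hgj
            rw [Function.update_self] at hgi
            rw [Function.update_of_ne (Ne.symm hij)] at hgj
            rcases List.mem_cons.mp hgi with h | h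
            · exact hfP j (h ▸ hgj)
            · exact hdisj i j hij g h hgj
          · by_cases hjj : j = i0
            · subst hjj
              rw [hP'] at hgi hgj
              rw [Function.update_of_ne hii] at hgi
              rw [Function.update_self] at hgj
              rcases List.mem_cons.mp hgj with h | h
              · exact hfP i (h ▸ hgi)
              · exact hdisj i j hij g hgi h
            · rw [hP', Function.update_of_ne hii] at hgi
              rw [hP', Function.update_of_ne hjj] at hgj
              exact hdisj i j hij g hgi hgj
        have hind' : LinearIndependent F (fun i => ψ (e' i)) := by
          rw [Fintype.linearIndependent_iff]
          intro g hg
          have hsum : g i0 • ψ f + ∑ i ∈ Finset.univ.erase i0, g i • ψ (e i) = 0 := by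
            rw [← hg, ← Finset.add_sum_erase _ _ (Finset.mem_univ i0)]
            congr 1
            · simp [he']
            · refine Finset.sum_congr rfl fun i hi => ?_
              rw [he', Function.update_of_ne (Finset.ne_of_mem_erase hi)]
          have hgi0 : g i0 = 0 := by
            by_contra h0
            apply hf2
            have hfx : ψ f = (g i0)⁻¹ • (-(∑ i ∈ Finset.univ.erase i0, g i • ψ (e i))) := by
              have h1 : g i0 • ψ f = -(∑ i ∈ Finset.univ.erase i0, g i • ψ (e i)) :=
                eq_neg_of_add_eq_zero_left hsum
              rw [← h1, smul_smul, inv_mul_cancel₀ h0, one_smul]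
            rw [hfx]
            refine Submodule.smul_mem _ _ (Submodule.neg_mem _ (Submodule.sum_mem _ ?_))
            intro i hi
            exact Submodule.smul_mem _ _
              (Submodule.subset_span ⟨i, by simp [Finset.ne_of_mem_erase hi], rfl⟩)
          have hrest : ∀ i, Function.update g i0 0 i = 0 := by
            apply Fintype.linearIndependent_iff.mp hind
            rw [← Finset.add_sum_erase _ _ (Finset.mem_univ i0)]
            have he1 : Function.update g i0 0 i0 • ψ (e i0) = 0 := by simp
            have he2 : ∑ i ∈ Finset.univ.erase i0, Function.update g i0 0 i • ψ (e i)
                = ∑ i ∈ Finset.univ.erase i0, g i • ψ (e i) := by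
              refine Finset.sum_congr rfl fun i hi => ?_
              rw [Function.update_of_ne (Finset.ne_of_mem_erase hi)]
            rw [he1, he2, zero_add]
            rw [hgi0, zero_smul, zero_add] at hsum
            exact hsum
          intro i
          by_cases hii : i = i0
          · subst hii; exact hgi0
          · have := hrest i
            rwa [Function.update_of_ne hii] at this
        have h4' : ∀ j, e' j ∉ Set.range ι → ∀ i, ∀ g ∈ P' i, g ≠ e' i →
            ν (tl (e' j)) ≤ ν (tl g) := by
          intro j hj i g hg hge
          have hνf : ν (tl f) < ν (tl (e i0)) := by rw [← hf1]; exact hν f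
          have hgold : (g ∈ P i ∧ g ≠ e i) ∨ (i = i0 ∧ g = e i0) := by
            by_cases hii : i = i0
            · rw [hii] at hg hge
              rw [hP', Function.update_self] at hg
              rw [he', Function.update_self] at hge
              rcases List.mem_cons.mp hg with h | h
              · exact absurd h hge
              · by_cases hgei0 : g = e i0
                · exact Or.inr ⟨hii, hgei0⟩
                · exact Or.inl (by rw [hii]; exact ⟨h, hgei0⟩)
            · rw [hP', Function.update_of_ne hii] at hg
              rw [he', Function.update_of_ne hii] at hge
              exact Or.inl ⟨hg, hge⟩
          by_cases hjj : j = i0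
          · rw [hjj] at hj ⊢
            rw [he', Function.update_self] at hj ⊢
            rcases hgold with ⟨h1, h2⟩ | ⟨h1, h2⟩
            · exact le_trans (le_of_lt hνf) (h4 i0 hi0 i g h1 h2)
            · rw [h2]; exact le_of_lt hνf
          · rw [he', Function.update_of_ne hjj] at hj ⊢
            rcases hgold with ⟨h1, h2⟩ | ⟨h1, h2⟩
            · exact h4 j hj i g h1 h2
            · rw [h2]; exact hmax j hj
        have hM' : (∑ i, (if e' i ∈ Set.range ι then 0 else ν (tl (e' i)) + 1)) ≤ N := by
          have hsplit : ∀ c : Fin k → ℕ,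
              ∑ i, c i = c i0 + ∑ i ∈ Finset.univ.erase i0, c i :=
            fun c => (Finset.add_sum_erase _ c (Finset.mem_univ i0)).symm
          rw [hsplit]
          rw [hsplit] at hM
          have heq : ∑ i ∈ Finset.univ.erase i0,
                (if e' i ∈ Set.range ι then 0 else ν (tl (e' i)) + 1)
              = ∑ i ∈ Finset.univ.erase i0,
                (if e i ∈ Set.range ι then 0 else ν (tl (e i)) + 1) := by
            refine Finset.sum_congr rfl fun i hi => ?_
            rw [he', Function.update_of_ne (Finset.ne_of_mem_erase hi)]
          rw [heq]
          have ht1 : (if e' i0 ∈ Set.range ι then 0 else ν (tl (e' i0)) + 1)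
              < (if e i0 ∈ Set.range ι then 0 else ν (tl (e i0)) + 1) := by
            have hνf : ν (tl f) < ν (tl (e i0)) := by rw [← hf1]; exact hν f
            rw [he', Function.update_self, if_neg hi0]
            by_cases hfι : f ∈ Set.range ι
            · rw [if_pos hfι]; omega
            · rw [if_neg hfι]; omega
          omega
        exact ih k e' P' hM' hPne' hPhead' hPlast' hPchain' hdisj' hind' h4'

end Aux

/-- For a linear network code `ψ` on a finite DAG and any vertex set `A`
containing all source vertices, the rank of the vectors received at `t` is at
most `maxflow(A, t)`. -/
theorem stmt13 {V E F : Type*} [Fintype E] [Field F] {r : ℕ}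
    (tl hd : E → V)
    (hacyc : ∀ v : V,
      ¬ Relation.TransGen (fun a b => ∃ e : E, tl e = a ∧ hd e = b) v v)
    (ι : Fin r → E) (hι : Function.Injective ι)
    (ψ : E → Fin r → F)
    (hψsrc : ∀ j, ψ (ι j) = Pi.single j 1)
    (hψ : ∀ e, e ∉ Set.range ι →
      ψ e ∈ Submodule.span F {x | ∃ e', hd e' = tl e ∧ x = ψ e'})
    (A : Set V) (hA : ∀ j, tl (ι j) ∈ A) (t : V) :
    Module.finrank F
        (Submodule.span F {x | ∃ e, hd e = t ∧ x = ψ e}) ≤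
      maxflow tl hd A t := by
  classical
  -- a topological height function
  set R : V → V → Prop := fun a b => ∃ e : E, tl e = a ∧ hd e = b with hR
  set SW : Set V := Set.range tl ∪ Set.range hd with hSW
  have hSWfin : SW.Finite := (Set.finite_range tl).union (Set.finite_range hd)
  set ν : V → ℕ := fun v => {w | w ∈ SW ∧ Relation.ReflTransGen R w v}.ncard with hνdef
  have hν : ∀ e : E, ν (tl e) < ν (hd e) := by
    intro e
    apply Set.ncard_lt_ncard
    · constructor
      · rintro w ⟨hw, hwr⟩
        exact ⟨hw, hwr.trans (Relation.ReflTransGen.single ⟨e, rfl, rfl⟩)⟩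
      · intro hsub
        have h1 : hd e ∈ {w | w ∈ SW ∧ Relation.ReflTransGen R w (hd e)} :=
          ⟨Or.inr ⟨e, rfl⟩, Relation.ReflTransGen.refl⟩
        have h2 := hsub h1
        exact hacyc (hd e) (Relation.TransGen.tail' h2.2 ⟨e, rfl, rfl⟩)
    · exact hSWfin.subset (fun w hw => hw.1)
  -- extract an independent family of edges into t realizing the rank
  set s : Set (Fin r → F) := {x | ∃ e, hd e = t ∧ x = ψ e} with hs
  obtain ⟨b, hbs, hbspan, hbind⟩ := exists_linearIndependent F s
  have hbfin : b.Finite := hbind.setFinite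
  haveI : Fintype b := hbfin.fintype
  have hcard : Module.finrank F (Submodule.span F s) = Fintype.card b := by
    rw [← hbspan, finrank_span_set_eq_card hbind, Set.toFinset_card]
  set k := Fintype.card b with hk
  set q : Fin k → b := fun i => (Fintype.equivFin b).symm i with hq
  have hchoice : ∀ i : Fin k, ∃ ed : E, hd ed = t ∧ (q i : Fin r → F) = ψ ed := by
    intro i
    exact hbs (q i).2
  choose ed hed1 hed2 using hchoice
  have hψed : (fun i => ψ (ed i)) = fun i => (q i : Fin r → F) := by
    funext i; exact (hed2 i).symm
  have hindfam : LinearIndependent F (fun i => ψ (ed i)) := by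
    rw [hψed]
    exact hbind.comp _ (Equiv.injective _)
  have hedinj : Function.Injective ed := by
    intro a b hab
    exact hindfam.injective (by simp only [hab])
  have hfinal : k ≤ maxflow tl hd A t := by
    refine key tl hd ι ψ hψ A hA t ν hν
      (∑ i, (if ed i ∈ Set.range ι then 0 else ν (tl (ed i)) + 1)) k ed
      (fun i => [ed i]) le_rfl (fun i => by simp) (fun i => by simp) (fun i => by simp [hed1])
      (fun i => List.isChain_singleton _) ?_ hindfam ?_
    · intro i j hij g hgi hgj
      simp only [List.mem_singleton] at hgi hgj
      exact hij (hedinj (hgi ▸ hgj ▸ rfl))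
    · intro j hj i g hg hge
      simp only [List.mem_singleton] at hg
      exact absurd hg hge
  rw [hcard]
  exact hfinal
end

section
/- (Converse direction rank obstruction) Suppose in a multi-source network the sink t satisfies Σ_{i∈dem(t)} rᵢ + maxflow(S* \ ∪_{i∈dem(t)}{s*ᵢ}, t) > maxflow(S*, t). Let ψ be any linear network code for which rank{ψ(e)|_{U₁} : head(e)=t} = Σ_{i∈dem(t)} rᵢ and rank{ψ(e)|_{U₂} : head(e)=t} = maxflow(S* \ ∪_{i∈dem(t)}{s*ᵢ}, t), where U₁ is spanned by the demanded unit vectors and U₂ by the rest. Then {b_{i,j} : i ∈ dem(t)} ⊄ span{ψ(e) : head(e)=t}, i.e., t cannot decode its demanded sources. -/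
open scoped Classical

set_option linter.unusedSectionVars false
namespace NCAux

variable {V E : Type*} (tl hd : E → V)

/-- vertex-level edge relation -/
def Rel (a b : V) : Prop := ∃ e : E, tl e = a ∧ hd e = b

lemma vchain : ∀ (p : List E), List.Chain' (fun e f => hd e = tl f) p →
    ∀ h : p ≠ [], List.Chain (Rel tl hd) (tl (p.head h)) (p.map hd)
  | [], _, h => absurd rfl h
  | [e], _, _ => List.Chain.cons ⟨e, rfl, rfl⟩ List.Chain.nil
  | e :: f :: p, hc, _ => by
      obtain ⟨h1, h2⟩ := List.isChain_cons_cons.mp hc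
      have ih := vchain (f :: p) h2 (by simp)
      simp only [List.head_cons] at ih ⊢
      exact List.Chain.cons ⟨e, rfl, rfl⟩ (by rw [h1]; exact ih)


lemma tchain (p : List E) (hc : List.Chain' (fun e f => hd e = tl f) p)
    (h : p ≠ []) :
    List.Chain (Relation.TransGen (Rel tl hd)) (tl (p.head h)) (p.map hd) :=
  List.IsChain.imp (fun _ _ hr => Relation.TransGen.single hr) (vchain tl hd p hc h)

lemma chain_pairwise (p : List E) (hc : List.Chain' (fun e f => hd e = tl f) p)
    (h : p ≠ []) :
    List.Pairwise (Relation.TransGen (Rel tl hd)) (tl (p.head h) :: p.map hd) :=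
  List.isChain_iff_pairwise.mp (tchain tl hd p hc h)

/-- acyclicity: the vertex list of a path has no duplicates -/
lemma chain_vnodup (hacyc : ∀ v : V, ¬ Relation.TransGen (Rel tl hd) v v) (p : List E) (hc : List.Chain' (fun e f => hd e = tl f) p)
    (h : p ≠ []) : (tl (p.head h) :: p.map hd).Nodup := by
  refine (chain_pairwise tl hd p hc h).imp ?_
  intro a b hr
  intro hab
  rw [hab] at hr
  exact hacyc b hr

lemma chain_transGen (p : List E) (hc : List.Chain' (fun e f => hd e = tl f) p)
    (h : p ≠ []) :
    Relation.TransGen (Rel tl hd) (tl (p.head h)) (hd (p.getLast h)) := by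
  have hp := chain_pairwise tl hd p hc h
  rcases List.pairwise_cons.mp hp with ⟨h1, _⟩
  exact h1 _ (List.mem_map_of_mem (f := hd) (List.getLast_mem h))

/-- a path cannot start at its own endpoint -/
lemma start_ne_end (hacyc : ∀ v : V, ¬ Relation.TransGen (Rel tl hd) v v) (p : List E) (hc : List.Chain' (fun e f => hd e = tl f) p)
    (h : p ≠ []) : tl (p.head h) ≠ hd (p.getLast h) := by
  intro he
  exact hacyc _ (he ▸ chain_transGen tl hd p hc h)

/-- the edge-predecessor relation is well-founded on a finite acyclic graph -/
lemma wf_pred (hacyc : ∀ v : V, ¬ Relation.TransGen (Rel tl hd) v v) [Finite E] : WellFounded (fun e' e : E => hd e' = tl e) := by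
  have hsub : ∀ e' e : E, hd e' = tl e →
      Relation.TransGen (Rel tl hd) (tl e') (tl e) := fun e' e h =>
    Relation.TransGen.single ⟨e', rfl, h⟩
  have hlift : ∀ {e' e : E},
      Relation.TransGen (fun a b : E => hd a = tl b) e' e →
      Relation.TransGen (Rel tl hd) (tl e') (tl e) := by
    intro e' e h
    induction h with
    | single h => exact hsub _ _ h
    | tail _ h ih => exact ih.trans (hsub _ _ h)
  haveI : IsTrans E (Relation.TransGen (fun a b : E => hd a = tl b)) :=
    ⟨fun _ _ _ h1 h2 => h1.trans h2⟩
  haveI : IsIrrefl E (Relation.TransGen (fun a b : E => hd a = tl b)) :=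
    ⟨fun e h => hacyc (tl e) (hlift h)⟩
  exact @Subrelation.wf E (Relation.TransGen (fun a b : E => hd a = tl b))
    (fun e' e : E => hd e' = tl e) (fun h => Relation.TransGen.single h)
    (Finite.wellFounded_of_trans_of_irrefl
      (Relation.TransGen (fun a b : E => hd a = tl b)))

section CutSpan

variable {V E : Type*} (tl hd : E → V)

/-- Every vector carried into a cut-protected edge lies in the span of the
vectors on the cut. -/
lemma cut_span {F M : Type*} [Field F] [AddCommGroup M] [Module F M]
    [Finite E]
    (hacyc : ∀ v : V, ¬ Relation.TransGen (Rel tl hd) v v)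
    (A : Set V) (ψ : E → M)
    (hψ : ∀ e, tl e ∉ A →
      ψ e ∈ Submodule.span F {x | ∃ e', hd e' = tl e ∧ x = ψ e'})
    (K : Set E) (e : E)
    (he : ∀ p (h : p ≠ []), List.Chain' (fun a b => hd a = tl b) p →
      tl (p.head h) ∈ A → p.getLast h = e → ∃ f ∈ p, f ∈ K) :
    ψ e ∈ Submodule.span F (ψ '' K) := by
  induction e using (wf_pred tl hd hacyc).induction with
  | _ e IH =>
  by_cases heK : e ∈ K
  · exact Submodule.subset_span ⟨e, heK, rfl⟩
  by_cases hA : tl e ∈ A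
  · obtain ⟨f, hf, hfK⟩ := he [e] (by simp) (List.isChain_singleton e) (by simpa) (by simp)
    simp only [List.mem_singleton] at hf
    exact absurd (hf ▸ hfK) heK
  · refine Submodule.span_le.2 ?_ (hψ e hA)
    rintro x ⟨e', he', rfl⟩
    refine IH e' he' (fun p h hc hA' hl => ?_)
    have hne : p ++ [e] ≠ [] := by simp
    obtain ⟨f, hfmem, hfK⟩ := he (p ++ [e]) hne
      (List.IsChain.append hc (List.isChain_singleton e)
        (by intro x hx y hy
            rw [List.getLast?_eq_getLast (l := p) h] at hx
            simp only [Option.mem_some_iff] at hx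
            simp only [List.head?_cons, Option.mem_some_iff] at hy
            subst hx; subst hy; rw [hl]; exact he'))
      (by rwa [List.head_append_of_ne_nil h])
      (by simp)
    rcases List.mem_append.1 hfmem with hfp | hfe
    · exact ⟨f, hfp, hfK⟩
    · simp only [List.mem_singleton] at hfe
      exact absurd (hfe ▸ hfK) heK

end CutSpan

section Flow

variable {V E : Type*} [Fintype E] (tl hd : E → V)

/-- number of `S`-edges with `f`-endpoint `v`, as an integer -/
noncomputable def deg (f : E → V) (S : Finset E) (v : V) : ℤ :=
  ((S.filter (fun e => f e = v)).card : ℤ)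

noncomputable def net (S : Finset E) (v : V) : ℤ :=
  deg tl S v - deg hd S v

lemma deg_insert (f : E → V) (S : Finset E) (e : E) (he : e ∉ S) (v : V) :
    deg f (insert e S) v = deg f S v + (if f e = v then 1 else 0) := by
  unfold deg
  rw [Finset.filter_insert]
  split_ifs with h
  · rw [Finset.card_insert_of_notMem (fun hc => he (Finset.mem_filter.1 hc).1)]
    push_cast; ring
  · ring

lemma deg_erase (f : E → V) (S : Finset E) (e : E) (he : e ∈ S) (v : V) :
    deg f (S.erase e) v = deg f S v - (if f e = v then 1 else 0) := by
  unfold deg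
  rw [Finset.filter_erase]
  by_cases h : f e = v
  · rw [Finset.card_erase_of_mem (Finset.mem_filter.2 ⟨he, h⟩), if_pos h]
    have h0 : 0 < (S.filter (fun e => f e = v)).card :=
      Finset.card_pos.2 ⟨e, Finset.mem_filter.2 ⟨he, h⟩⟩
    rw [Nat.cast_sub (by omega)]
    norm_num
  · have hne : e ∉ S.filter (fun e => f e = v) :=
      fun hc => h (Finset.mem_filter.1 hc).2
    rw [Finset.erase_eq_of_notMem hne, if_neg h]
    norm_num

/-- residual walk: `true` steps go forward along unused edges, `false` steps go
backward along used edges. -/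
def Walk (S : Finset E) : List (E × Bool) → V → V → Prop
  | [], a, c => a = c
  | (e, bb) :: L, a, c =>
      if bb then e ∉ S ∧ tl e = a ∧ Walk S L (hd e) c
      else e ∈ S ∧ hd e = a ∧ Walk S L (tl e) c

lemma walk_append (S : Finset E) (L₁ L₂ : List (E × Bool)) (a c : V) :
    Walk tl hd S (L₁ ++ L₂) a c ↔ ∃ b, Walk tl hd S L₁ a b ∧ Walk tl hd S L₂ b c := by
  induction L₁ generalizing a with
  | nil => simp [Walk]
  | cons p L ih =>
    obtain ⟨e, bb⟩ := p
    cases bb <;> simp [Walk, ih, and_assoc]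

lemma walk_congr (S S' : Finset E) (L : List (E × Bool)) (a c : V)
    (hmem : ∀ f ∈ L.map Prod.fst, (f ∈ S' ↔ f ∈ S))
    (hw : Walk tl hd S L a c) : Walk tl hd S' L a c := by
  induction L generalizing a with
  | nil => exact hw
  | cons p L ih =>
    obtain ⟨e, bb⟩ := p
    have he := hmem e (by simp)
    have hmem' : ∀ f ∈ L.map Prod.fst, (f ∈ S' ↔ f ∈ S) :=
      fun f hf => hmem f (by simp [hf])
    cases bb <;> simp only [Walk, if_true, if_false, Bool.false_eq_true] at hw ⊢
    · exact ⟨he.2 hw.1, hw.2.1, ih _ hmem' hw.2.2⟩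
    · exact ⟨fun hc => hw.1 (he.1 hc), hw.2.1, ih _ hmem' hw.2.2⟩

/-- every residual walk contains one with no repeated edges -/
lemma walk_dedup (S : Finset E) (L : List (E × Bool)) (a c : V)
    (hw : Walk tl hd S L a c) :
    ∃ L', Walk tl hd S L' a c ∧ (L'.map Prod.fst).Nodup := by
  induction L generalizing a with
  | nil => exact ⟨[], hw, by simp⟩
  | cons p L ih =>
    obtain ⟨e, bb⟩ := p
    have key : ∀ w, Walk tl hd S L w c → ∃ L', Walk tl hd S L' w c ∧
        (L'.map Prod.fst).Nodup := fun w hw' => ih w hw'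
    cases bb <;> simp only [Walk, if_true, if_false, Bool.false_eq_true] at hw
    case true =>
      obtain ⟨heS, hte, hw'⟩ := hw
      obtain ⟨L', hL', hnd⟩ := key _ hw'
      by_cases hmem : e ∈ L'.map Prod.fst
      · -- splice: e occurs in L'
        obtain ⟨q, hq, hqe⟩ := List.mem_map.1 hmem
        obtain ⟨b₂, rfl⟩ : ∃ b₂, q = (e, b₂) := ⟨q.2, by rw [← hqe]⟩
        obtain ⟨M₁, M₂, rfl⟩ := List.append_of_mem hq
        obtain ⟨mid, hw1, hw2⟩ := (walk_append tl hd S M₁ ((e, b₂) :: M₂) _ _).1 hL'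
        have hnd2 : e ∉ M₂.map Prod.fst ∧ (M₂.map Prod.fst).Nodup := by
          rw [List.map_append, List.map_cons] at hnd
          have := (List.sublist_append_right (M₁.map Prod.fst) _).nodup hnd
          exact List.nodup_cons.1 this
        cases b₂
        · simp only [Walk, if_neg (by simp : ¬(false = true))] at hw2
          exact absurd hw2.1 heS
        · simp only [Walk, if_pos rfl] at hw2
          exact ⟨(e, true) :: M₂,
            by simp only [Walk, if_pos rfl]; exact ⟨heS, hte, hw2.2.2⟩,
            by rw [List.map_cons]; exact List.nodup_cons.2 hnd2⟩
      · exact ⟨(e, true) :: L', by simp only [Walk, if_pos rfl]; exact ⟨heS, hte, hL'⟩,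
          by rw [List.map_cons]; exact List.nodup_cons.2 ⟨hmem, hnd⟩⟩
    case false =>
      obtain ⟨heS, hhe, hw'⟩ := hw
      obtain ⟨L', hL', hnd⟩ := key _ hw'
      by_cases hmem : e ∈ L'.map Prod.fst
      · obtain ⟨q, hq, hqe⟩ := List.mem_map.1 hmem
        obtain ⟨b₂, rfl⟩ : ∃ b₂, q = (e, b₂) := ⟨q.2, by rw [← hqe]⟩
        obtain ⟨M₁, M₂, rfl⟩ := List.append_of_mem hq
        obtain ⟨mid, hw1, hw2⟩ := (walk_append tl hd S M₁ ((e, b₂) :: M₂) _ _).1 hL'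
        have hnd2 : e ∉ M₂.map Prod.fst ∧ (M₂.map Prod.fst).Nodup := by
          rw [List.map_append, List.map_cons] at hnd
          have := (List.sublist_append_right (M₁.map Prod.fst) _).nodup hnd
          exact List.nodup_cons.1 this
        cases b₂
        · simp only [Walk, if_neg (by simp : ¬(false = true))] at hw2
          exact ⟨(e, false) :: M₂,
            by simp only [Walk, if_neg (by simp : ¬(false = true))]
               exact ⟨heS, hhe, hw2.2.2⟩,
            by rw [List.map_cons]; exact List.nodup_cons.2 hnd2⟩
        · simp only [Walk, if_pos rfl] at hw2
          exact absurd heS hw2.1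
      · exact ⟨(e, false) :: L',
          by simp only [Walk, if_neg (by simp : ¬(false = true))]
             exact ⟨heS, hhe, hL'⟩,
          by rw [List.map_cons]; exact List.nodup_cons.2 ⟨hmem, hnd⟩⟩

end Flow

section Surgery

variable {V E : Type*} [Fintype E] (tl hd : E → V)

lemma net_insert (S : Finset E) (e : E) (he : e ∉ S) (v : V) :
    net tl hd (insert e S) v = net tl hd S v
      + (if tl e = v then 1 else 0) - (if hd e = v then 1 else 0) := by
  unfold net
  rw [deg_insert tl S e he, deg_insert hd S e he]
  ring

lemma net_erase (S : Finset E) (e : E) (he : e ∈ S) (v : V) :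
    net tl hd (S.erase e) v = net tl hd S v
      - (if tl e = v then 1 else 0) + (if hd e = v then 1 else 0) := by
  unfold net
  rw [deg_erase tl S e he, deg_erase hd S e he]
  ring

lemma surgery : ∀ (L : List (E × Bool)) (S : Finset E) (a c : V),
    Walk tl hd S L a c → (L.map Prod.fst).Nodup →
    ∃ S' : Finset E, ∀ v, net tl hd S' v = net tl hd S v
      + (if a = v then 1 else 0) - (if c = v then 1 else 0)
  | [], S, a, c, hw, _ => by
      have hac : a = c := hw
      subst hac
      exact ⟨S, fun v => by ring⟩
  | (e, bb) :: L, S, a, c, hw, hnd => by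
      have hnd' : (L.map Prod.fst).Nodup := (List.nodup_cons.1 (by simpa using hnd)).2
      have hem : e ∉ L.map Prod.fst := (List.nodup_cons.1 (by simpa using hnd)).1
      cases bb
      · simp only [Walk, if_neg (by simp : ¬(false = true))] at hw
        obtain ⟨heS, hhe, hw'⟩ := hw
        have hw'' : Walk tl hd (S.erase e) L (tl e) c :=
          walk_congr tl hd S (S.erase e) L _ _
            (fun f hf => by
              rw [Finset.mem_erase]
              exact ⟨fun h => h.2, fun h => ⟨fun hc => hem (hc ▸ hf), h⟩⟩) hw'
        obtain ⟨S', hS'⟩ := surgery L (S.erase e) (tl e) c hw'' hnd'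
        refine ⟨S', fun v => ?_⟩
        rw [hS' v, net_erase tl hd S e heS v]
        subst hhe
        ring
      · simp only [Walk, if_pos rfl] at hw
        obtain ⟨heS, hte, hw'⟩ := hw
        have hw'' : Walk tl hd (insert e S) L (hd e) c :=
          walk_congr tl hd S (insert e S) L _ _
            (fun f hf => by
              rw [Finset.mem_insert]
              exact ⟨fun h => h.elim (fun hc => absurd (hc ▸ hf) hem) id,
                fun h => Or.inr h⟩) hw'
        obtain ⟨S', hS'⟩ := surgery L (insert e S) (hd e) c hw'' hnd'
        refine ⟨S', fun v => ?_⟩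
        rw [hS' v, net_insert tl hd S e heS v]
        subst hte
        ring

end Surgery

section Decomp

variable {V E : Type*} [Fintype E] (tl hd : E → V)

lemma map_tl_eq : ∀ (p : List E), List.Chain' (fun a b => hd a = tl b) p →
    ∀ h : p ≠ [], p.map tl = tl (p.head h) :: (p.map hd).dropLast
  | [], _, h => absurd rfl h
  | [e], _, _ => by simp
  | e :: f :: q, hc, _ => by
    obtain ⟨h1, h2⟩ := List.isChain_cons_cons.mp hc
    have ih := map_tl_eq (f :: q) h2 (by simp)
    simp only [List.map_cons, List.head_cons] at ih ⊢
    rw [List.dropLast_cons₂]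
    rw [ih, ← h1]

lemma getLast_map_hd (p : List E) (h : p ≠ []) :
    (p.map hd).getLast (by simpa using h) = hd (p.getLast h) :=
  List.getLast_map (f := hd) (l := p) _

/-- predecessor edge inside a chain -/
lemma chain_pred : ∀ (p : List E), List.Chain' (fun a b => hd a = tl b) p →
    ∀ f ∈ p, ∀ h : p ≠ [], f ≠ p.head h → ∃ g ∈ p, hd g = tl f
  | [], _, _, hf, h, _ => absurd rfl h
  | e :: q, hc, f, hf, _, hne => by
    simp only [List.head_cons] at hne
    rcases List.mem_cons.1 hf with rfl | hfq
    · exact absurd rfl hne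
    · match q, hfq with
      | e' :: q', hfq =>
        obtain ⟨h1, h2⟩ := List.isChain_cons_cons.mp hc
        by_cases hfe : f = e'
        · exact ⟨e, by simp, by rw [hfe]; exact h1⟩
        · obtain ⟨g, hg, hgf⟩ := chain_pred (e' :: q') h2 f hfq
            (by simp) (by simpa using hfe)
          exact ⟨g, by simp [List.mem_cons.1 hg], hgf⟩

/-- successor edge inside a chain -/
lemma chain_succ : ∀ (p : List E), List.Chain' (fun a b => hd a = tl b) p →
    ∀ g ∈ p, ∀ h : p ≠ [], g ≠ p.getLast h → ∃ f ∈ p, tl f = hd g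
  | [], _, _, hf, h, _ => absurd rfl h
  | e :: q, hc, g, hg, _, hne => by
    match q with
    | [] =>
      simp only [List.mem_singleton] at hg
      simp only [List.getLast_singleton] at hne
      exact absurd hg hne
    | e' :: q' =>
      obtain ⟨h1, h2⟩ := List.isChain_cons_cons.mp hc
      rcases List.mem_cons.1 hg with rfl | hgq
      · exact ⟨e', by simp, h1.symm⟩
      · have hne' : g ≠ (e' :: q').getLast (by simp) := by
          intro hgl
          apply hne
          rw [List.getLast_cons (by simp : e' :: q' ≠ [])]
          exact hgl
        obtain ⟨f, hf, hft⟩ := chain_succ (e' :: q') h2 g hgq (by simp) hne'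
        exact ⟨f, by simp [List.mem_cons.1 hf], hft⟩

end Decomp

section Decomp2

variable {V E : Type*} [Fintype E] (tl hd : E → V)

lemma deg_sdiff (f : E → V) (S T : Finset E) (hTS : T ⊆ S) (v : V) :
    deg f (S \ T) v = deg f S v - deg f T v := by
  unfold deg
  have hset : (S \ T).filter (fun e => f e = v)
      = S.filter (fun e => f e = v) \ T.filter (fun e => f e = v) := by
    ext e
    simp only [Finset.mem_filter, Finset.mem_sdiff]
    tauto
  rw [hset, Finset.card_sdiff_of_subset (Finset.filter_subset_filter _ hTS),
    Nat.cast_sub (Finset.card_le_card (Finset.filter_subset_filter _ hTS))]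

/-- backward walk: from any used edge whose head reaches `t`, there is a path
from `A` within `S` ending with that edge. -/
lemma bwalk (hacyc : ∀ v : V, ¬ Relation.TransGen (Rel tl hd) v v)
    (A : Set V) (t : V) (S : Finset E)
    (hcons : ∀ v, v ∉ A → v ≠ t → net tl hd S v = 0) :
    ∀ e, e ∈ S → Relation.ReflTransGen (Rel tl hd) (hd e) t →
    ∃ (p : List E) (h : p ≠ []), List.Chain' (fun a b => hd a = tl b) p ∧
      p.getLast h = e ∧ tl (p.head h) ∈ A ∧ ∀ f ∈ p, f ∈ S := by
  intro e
  induction e using (wf_pred tl hd hacyc).induction with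
  | _ e IH =>
  intro heS hrt
  by_cases hA : tl e ∈ A
  · exact ⟨[e], by simp, List.isChain_singleton e, by simp, by simpa using hA,
      by simpa using heS⟩
  · have hte : tl e ≠ t := by
      intro hte
      exact hacyc t (Relation.TransGen.head' ⟨e, hte, rfl⟩ hrt)
    have h1 : 0 < (S.filter (fun f => tl f = tl e)).card :=
      Finset.card_pos.2 ⟨e, Finset.mem_filter.2 ⟨heS, rfl⟩⟩
    have h0 := hcons (tl e) hA hte
    unfold net deg at h0
    have h2 : (S.filter (fun f => hd f = tl e)).Nonempty := by
      rw [← Finset.card_pos]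
      have : (S.filter (fun f => tl f = tl e)).card
          = (S.filter (fun f => hd f = tl e)).card := by exact_mod_cast sub_eq_zero.mp h0
      omega
    obtain ⟨e', he'⟩ := h2
    rw [Finset.mem_filter] at he'
    obtain ⟨p, hp, hchain, hlast, hA', hsub⟩ := IH e' he'.2 he'.1
      (by rw [he'.2]; exact Relation.ReflTransGen.head ⟨e, rfl, rfl⟩ hrt)
    refine ⟨p ++ [e], by simp, ?_, by simp, ?_, ?_⟩
    · refine List.IsChain.append hchain (List.isChain_singleton e) ?_
      intro x hx y hy
      rw [List.getLast?_eq_getLast (l := p) hp] at hx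
      simp only [Option.mem_some_iff] at hx
      simp only [List.head?_cons, Option.mem_some_iff] at hy
      subst hx; subst hy
      rw [hlast]
      exact he'.2
    · rwa [List.head_append_of_ne_nil hp]
    · intro f hf
      rcases List.mem_append.1 hf with hf | hf
      · exact hsub f hf
      · simp only [List.mem_singleton] at hf
        exact hf ▸ heS

end Decomp2

section Decomp3

variable {V E : Type*} [Fintype E] (tl hd : E → V)

/-- facts about the endpoint-multiplicities of an acyclic path -/
lemma path_count (hacyc : ∀ v : V, ¬ Relation.TransGen (Rel tl hd) v v)
    (A : Set V) (p : List E) (h : p ≠ [])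
    (hc : List.Chain' (fun a b => hd a = tl b) p) (hA : tl (p.head h) ∈ A) :
    ((p.toFinset.filter (fun e => tl e = hd (p.getLast h))).card = 0 ∧
     (p.toFinset.filter (fun e => hd e = hd (p.getLast h))).card = 1) ∧
    ∀ v, v ∉ A → v ≠ hd (p.getLast h) →
      (p.toFinset.filter (fun e => tl e = v)).card
        = (p.toFinset.filter (fun e => hd e = v)).card := by
  have hvnd := chain_vnodup tl hd hacyc p hc h
  have hmhd : p.map hd ≠ [] := by simpa using h
  have hnd_hd : (p.map hd).Nodup := (List.nodup_cons.1 hvnd).2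
  have hmtl := map_tl_eq tl hd p hc h
  have hdrop : (tl (p.head h) :: p.map hd).dropLast
      = tl (p.head h) :: (p.map hd).dropLast := by
    match hq : p.map hd with
    | [] => exact absurd hq hmhd
    | y :: ys => exact List.dropLast_cons₂
  have hnd_tl : (p.map tl).Nodup := by
    rw [hmtl, ← hdrop]
    exact (List.dropLast_sublist _).nodup hvnd
  have hlastv : hd (p.getLast h)
      = (tl (p.head h) :: p.map hd).getLast (by simp) := by
    rw [List.getLast_cons hmhd, getLast_map_hd hd p h]
  have htnotin : hd (p.getLast h) ∉ p.map tl := by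
    rw [hmtl, ← hdrop]
    intro hmem
    have hsplit := List.dropLast_append_getLast
      (l := tl (p.head h) :: p.map hd) (by simp)
    have hdisj := List.disjoint_of_nodup_append (by rw [hsplit]; exact hvnd)
    exact hdisj hmem (by rw [← hlastv]; simp)
  constructor
  · constructor
    · rw [Finset.card_eq_zero, Finset.filter_eq_empty_iff]
      intro f hf
      rw [List.mem_toFinset] at hf
      intro hfeq
      exact htnotin (hfeq ▸ List.mem_map_of_mem (f := tl) hf)
    · rw [Finset.card_eq_one]
      refine ⟨p.getLast h, Finset.eq_singleton_iff_unique_mem.2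
        ⟨Finset.mem_filter.2 ⟨List.mem_toFinset.2 (List.getLast_mem h), rfl⟩, ?_⟩⟩
      intro b hb
      rw [Finset.mem_filter, List.mem_toFinset] at hb
      exact List.inj_on_of_nodup_map hnd_hd hb.1 (List.getLast_mem h) hb.2
  · intro v hvA hvt
    have hX1 : (p.toFinset.filter (fun e => tl e = v)).card ≤ 1 :=
      Finset.card_le_one.2 (fun a ha b hb => by
        rw [Finset.mem_filter, List.mem_toFinset] at ha hb
        exact List.inj_on_of_nodup_map hnd_tl ha.1 hb.1 (ha.2.trans hb.2.symm))
    have hY1 : (p.toFinset.filter (fun e => hd e = v)).card ≤ 1 :=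
      Finset.card_le_one.2 (fun a ha b hb => by
        rw [Finset.mem_filter, List.mem_toFinset] at ha hb
        exact List.inj_on_of_nodup_map hnd_hd ha.1 hb.1 (ha.2.trans hb.2.symm))
    have hXY : (p.toFinset.filter (fun e => tl e = v)).Nonempty
        ↔ (p.toFinset.filter (fun e => hd e = v)).Nonempty := by
      constructor
      · rintro ⟨f, hf⟩
        rw [Finset.mem_filter, List.mem_toFinset] at hf
        have hfh : f ≠ p.head h := by
          rintro rfl
          exact hvA (hf.2 ▸ hA)
        obtain ⟨g, hg, hgf⟩ := chain_pred tl hd p hc f hf.1 h hfh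
        exact ⟨g, Finset.mem_filter.2 ⟨List.mem_toFinset.2 hg, hgf.trans hf.2⟩⟩
      · rintro ⟨g, hg⟩
        rw [Finset.mem_filter, List.mem_toFinset] at hg
        have hgl : g ≠ p.getLast h := by
          rintro rfl
          exact hvt hg.2.symm
        obtain ⟨f, hf, hft⟩ := chain_succ tl hd p hc g hg.1 h hgl
        exact ⟨f, Finset.mem_filter.2 ⟨List.mem_toFinset.2 hf, hft.trans hg.2⟩⟩
    rcases Finset.eq_empty_or_nonempty (p.toFinset.filter (fun e => tl e = v)) with
      hemp | hne
    · rw [hemp]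
      rcases Finset.eq_empty_or_nonempty (p.toFinset.filter (fun e => hd e = v)) with
        hemp' | hne'
      · rw [hemp']
      · exact absurd (hXY.2 hne') (by rw [hemp]; simp [Finset.not_nonempty_empty])
    · have hne' := hXY.1 hne
      have := Finset.card_pos.2 hne
      have := Finset.card_pos.2 hne'
      omega

end Decomp3

section Decomp4

variable {V E : Type*} [Fintype E] (tl hd : E → V)

lemma flow_decomp (hacyc : ∀ v : V, ¬ Relation.TransGen (Rel tl hd) v v)
    (A : Set V) (t : V) (htA : t ∉ A) :
    ∀ (k : ℕ) (S : Finset E), (∀ v, v ∉ A → v ≠ t → net tl hd S v = 0) →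
    (k : ℤ) ≤ - net tl hd S t →
    ∃ P : Fin k → List E, (∀ i, IsPathFrom tl hd A t (P i)) ∧
      (∀ i, ∀ f ∈ P i, f ∈ S) ∧ (∀ i j, i ≠ j → ∀ e, e ∈ P i → e ∉ P j)
  | 0, S, _, _ => ⟨fun i => i.elim0, fun i => i.elim0, fun i => i.elim0,
      fun i => i.elim0⟩
  | (k+1), S, hcons, hval => by
    have hpos : (0:ℤ) < deg hd S t - deg tl S t := by
      unfold net at hval; push_cast at hval ⊢; omega
    have hne : (S.filter (fun f => hd f = t)).Nonempty := by
      rw [← Finset.card_pos]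
      by_contra hc
      unfold deg at hpos
      have h0 : (S.filter (fun f => hd f = t)).card = 0 := by omega
      rw [h0] at hpos
      have : (0:ℤ) ≤ ((S.filter (fun f => tl f = t)).card : ℤ) := by positivity
      omega
    obtain ⟨e, he⟩ := hne
    rw [Finset.mem_filter] at he
    obtain ⟨p, h, hchain, hlast, hA', hsub⟩ := bwalk tl hd hacyc A t S hcons e he.1
      (by rw [he.2])
    have hlastt : hd (p.getLast h) = t := by rw [hlast]; exact he.2
    have hpT : p.toFinset ⊆ S := fun f hf => hsub f (List.mem_toFinset.1 hf)
    obtain ⟨⟨pc0, pc1⟩, pc2⟩ := path_count tl hd hacyc A p h hchain hA'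
    set S' := S \ p.toFinset with hS'
    have hcons' : ∀ v, v ∉ A → v ≠ t → net tl hd S' v = 0 := by
      intro v hvA hvt
      unfold net
      rw [deg_sdiff tl S p.toFinset hpT, deg_sdiff hd S p.toFinset hpT]
      have hcnt := pc2 v hvA (by rw [hlastt]; exact hvt)
      have := hcons v hvA hvt
      unfold net at this
      unfold deg
      unfold deg at this
      push_cast
      rw [hcnt] at *
      push_cast at this
      linarith
    have hval' : (k : ℤ) ≤ - net tl hd S' t := by
      unfold net
      rw [deg_sdiff tl S p.toFinset hpT, deg_sdiff hd S p.toFinset hpT]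
      unfold net at hval
      unfold deg at hval ⊢
      rw [hlastt] at pc0 pc1
      rw [pc0, pc1]
      push_cast at hval ⊢
      omega
    obtain ⟨P', hP1, hP2, hP3⟩ := flow_decomp hacyc A t htA k S' hcons' hval'
    refine ⟨Fin.cons p P', ?_, ?_, ?_⟩
    · intro i
      induction i using Fin.cases with
      | zero =>
        rw [Fin.cons_zero]
        exact ⟨h, hA', hlastt, hchain⟩
      | succ i' =>
        rw [Fin.cons_succ]
        exact hP1 i'
    · intro i
      induction i using Fin.cases with
      | zero => rw [Fin.cons_zero]; exact hsub
      | succ i' =>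
        rw [Fin.cons_succ]
        intro f hf
        exact (Finset.mem_sdiff.1 (hP2 i' f hf)).1
    · intro i j hij f hfi hfj
      induction i using Fin.cases with
      | zero =>
        induction j using Fin.cases with
        | zero => exact hij rfl
        | succ j' =>
          rw [Fin.cons_zero] at hfi
          rw [Fin.cons_succ] at hfj
          exact (Finset.mem_sdiff.1 (hP2 j' f hfj)).2 (List.mem_toFinset.2 hfi)
      | succ i' =>
        induction j using Fin.cases with
        | zero =>
          rw [Fin.cons_zero] at hfj
          rw [Fin.cons_succ] at hfi
          exact (Finset.mem_sdiff.1 (hP2 i' f hfi)).2 (List.mem_toFinset.2 hfj)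
        | succ j' =>
          rw [Fin.cons_succ] at hfi hfj
          exact hP3 i' j' (fun hc => hij (by rw [hc])) f hfi hfj

lemma maxflow_bddAbove (A : Set V) (t : V) :
    BddAbove {n | ∃ P : Fin n → List E, (∀ i, IsPathFrom tl hd A t (P i)) ∧
      ∀ i j, i ≠ j → ∀ e, e ∈ P i → e ∉ P j} := by
  refine ⟨Fintype.card E, fun n hn => ?_⟩
  obtain ⟨P, hP, hdisj⟩ := hn
  have hinj : Function.Injective (fun i => (P i).head (hP i).1) := by
    intro i j hij
    by_contra hne
    have h1 : (P i).head (hP i).1 ∈ P i := List.head_mem _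
    have h2 : (P j).head (hP j).1 ∈ P j := List.head_mem _
    simp only at hij
    exact hdisj i j hne _ h1 (hij ▸ h2)
  simpa using Fintype.card_le_of_injective _ hinj

lemma le_maxflow (A : Set V) (t : V) (k : ℕ) (P : Fin k → List E)
    (hP : ∀ i, IsPathFrom tl hd A t (P i))
    (hdisj : ∀ i j, i ≠ j → ∀ e, e ∈ P i → e ∉ P j) :
    k ≤ maxflow tl hd A t :=
  le_csSup (maxflow_bddAbove tl hd A t) ⟨P, hP, hdisj⟩

end Decomp4

section MaxCut

variable {V E : Type*} [Fintype E] (tl hd : E → V)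

lemma cross (Z : Set V) : ∀ (p : List E), List.Chain' (fun a b => hd a = tl b) p →
    ∀ h : p ≠ [], tl (p.head h) ∈ Z → hd (p.getLast h) ∉ Z →
    ∃ f ∈ p, tl f ∈ Z ∧ hd f ∉ Z
  | [], _, h, _, _ => absurd rfl h
  | [e], _, _, h1, h2 => ⟨e, by simp, by simpa using h1, by simpa using h2⟩
  | e :: e' :: q, hc, _, h1, h2 => by
    obtain ⟨hce, hcq⟩ := List.isChain_cons_cons.mp hc
    by_cases hz : hd e ∈ Z
    · have h2' : hd ((e' :: q).getLast (by simp)) ∉ Z := by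
        rwa [List.getLast_cons (by simp : e' :: q ≠ [])] at h2
      obtain ⟨f, hf, hfz⟩ := cross Z (e' :: q) hcq (by simp)
        (by rw [List.head_cons, ← hce]; exact hz) h2'
      exact ⟨f, List.mem_cons_of_mem e hf, hfz⟩
    · exact ⟨e, by simp, by simpa using h1, hz⟩

lemma sum_deg_filter (f : E → V) (S : Finset E) (T : Finset V)
    (hT : ∀ e ∈ S, f e ∈ T) (Z : Set V) :
    ∑ v ∈ T.filter (· ∈ Z), deg f S v
      = ((S.filter (fun e => f e ∈ Z)).card : ℤ) := by
  have key := Finset.card_eq_sum_card_fiberwise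
    (f := f) (s := S.filter (fun e => f e ∈ Z)) (t := T.filter (· ∈ Z))
    (fun e he => by
      rw [Finset.mem_coe, Finset.mem_filter] at he
      exact Finset.mem_filter.2 ⟨hT e he.1, he.2⟩)
  rw [key]
  push_cast
  refine Finset.sum_congr rfl (fun v hv => ?_)
  rw [Finset.mem_filter] at hv
  unfold deg
  have hv2 : (S.filter (fun e => f e ∈ Z)).filter (fun e => f e = v)
      = S.filter (fun e => f e = v) := by
    ext e
    simp only [Finset.mem_filter]
    constructor
    · rintro ⟨⟨h1, _⟩, h3⟩; exact ⟨h1, h3⟩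
    · rintro ⟨h1, h3⟩; exact ⟨⟨h1, h3 ▸ hv.2⟩, h3⟩
  rw [hv2]

lemma exists_cut (hacyc : ∀ v : V, ¬ Relation.TransGen (Rel tl hd) v v)
    (A : Set V) (t : V) (htA : t ∉ A) :
    ∃ K : Finset E, (∀ p, IsPathFrom tl hd A t p → ∃ f ∈ p, f ∈ K) ∧
      K.card ≤ maxflow tl hd A t := by
  -- the conservation property
  set Cons : Finset E → Prop :=
    fun S => ∀ v, v ∉ A → v ≠ t → net tl hd S v = 0 with hCons
  have hnet0 : ∀ v, net tl hd (∅ : Finset E) v = 0 := by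
    intro v; unfold net deg; simp
  -- choose a maximum-value flow
  obtain ⟨S, hSmem, hSmax⟩ := Finset.exists_max_image
    (Finset.univ.filter Cons) (fun S => - net tl hd S t)
    ⟨∅, Finset.mem_filter.2 ⟨Finset.mem_univ _, fun v _ _ => hnet0 v⟩⟩
  have hScons : Cons S := (Finset.mem_filter.1 hSmem).2
  have hval0 : (0:ℤ) ≤ - net tl hd S t := by
    have := hSmax ∅ (Finset.mem_filter.2 ⟨Finset.mem_univ _, fun v _ _ => hnet0 v⟩)
    rwa [hnet0, neg_zero] at this
  -- no augmenting walk
  have hnoaug : ∀ a ∈ A, ∀ L, ¬ Walk tl hd S L a t := by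
    intro a ha L hw
    obtain ⟨L', hw', hnd⟩ := walk_dedup tl hd S L a t hw
    obtain ⟨S', hS'⟩ := surgery tl hd L' S a t hw' hnd
    have hat : a ≠ t := fun hc => htA (hc ▸ ha)
    have hcons' : Cons S' := by
      intro v hvA hvt
      rw [hS' v, hScons v hvA hvt, if_neg (fun hc : a = v => hvA (hc ▸ ha)),
        if_neg (fun hc : t = v => hvt hc.symm)]
      ring
    have hval' : - net tl hd S' t = - net tl hd S t + 1 := by
      rw [hS' t, if_neg hat, if_pos rfl]; ring
    have := hSmax S' (Finset.mem_filter.2 ⟨Finset.mem_univ _, hcons'⟩)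
    omega
  -- reachable set
  set Z : Set V := {v | ∃ a ∈ A, ∃ L, Walk tl hd S L a v} with hZ
  have hAZ : A ⊆ Z := fun a ha => ⟨a, ha, [], by simp [Walk]⟩
  have htZ : t ∉ Z := by
    rintro ⟨a, ha, L, hw⟩
    exact hnoaug a ha L hw
  have hfwd : ∀ f, f ∉ S → tl f ∈ Z → hd f ∈ Z := by
    rintro f hfS ⟨a, ha, L, hw⟩
    refine ⟨a, ha, L ++ [(f, true)], (walk_append tl hd S L _ a _).2
      ⟨tl f, hw, ?_⟩⟩
    simpa [Walk] using hfS
  have hbwd : ∀ f, f ∈ S → hd f ∈ Z → tl f ∈ Z := by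
    rintro f hfS ⟨a, ha, L, hw⟩
    refine ⟨a, ha, L ++ [(f, false)], (walk_append tl hd S L _ a _).2
      ⟨hd f, hw, ?_⟩⟩
    simpa [Walk] using hfS
  -- the cut
  refine ⟨S.filter (fun e => tl e ∈ Z ∧ hd e ∉ Z), ?_, ?_⟩
  · rintro p ⟨h, hA', hlast, hchain⟩
    obtain ⟨f, hf, hf1, hf2⟩ := cross tl hd Z p hchain h (hAZ hA')
      (by rw [hlast]; exact htZ)
    have hfS : f ∈ S := by
      by_contra hfS
      exact hf2 (hfwd f hfS hf1)
    exact ⟨f, hf, Finset.mem_filter.2 ⟨hfS, hf1, hf2⟩⟩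
  · -- counting: the cut size equals the flow value
    classical
    set T : Finset V := S.image tl ∪ S.image hd with hT
    have hTtl : ∀ e ∈ S, tl e ∈ T := fun e he =>
      Finset.mem_union_left _ (Finset.mem_image_of_mem tl he)
    have hThd : ∀ e ∈ S, hd e ∈ T := fun e he =>
      Finset.mem_union_right _ (Finset.mem_image_of_mem hd he)
    have c1 : ∑ v ∈ T.filter (· ∈ Z), deg tl S v
        = ((S.filter (fun e => tl e ∈ Z)).card : ℤ) :=
      sum_deg_filter tl S T hTtl Z
    have c2 : ∑ v ∈ T.filter (· ∈ Z), deg hd S v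
        = ((S.filter (fun e => hd e ∈ Z)).card : ℤ) :=
      sum_deg_filter hd S T hThd Z
    have c1u : ∑ v ∈ T, deg tl S v = (S.card : ℤ) := by
      have := sum_deg_filter tl S T hTtl Set.univ
      simpa using this
    have c2u : ∑ v ∈ T, deg hd S v = (S.card : ℤ) := by
      have := sum_deg_filter hd S T hThd Set.univ
      simpa using this
    -- split the Z-filter of tl into cut and interior
    have hunion : S.filter (fun e => tl e ∈ Z)
        = (S.filter (fun e => tl e ∈ Z ∧ hd e ∉ Z)) ∪ (S.filter (fun e => hd e ∈ Z)) := by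
      ext e
      simp only [Finset.mem_filter, Finset.mem_union]
      constructor
      · rintro ⟨heS, htl⟩
        by_cases hhd : hd e ∈ Z
        · exact Or.inr ⟨heS, hhd⟩
        · exact Or.inl ⟨heS, htl, hhd⟩
      · rintro (⟨heS, htl, _⟩ | ⟨heS, hhd⟩)
        · exact ⟨heS, htl⟩
        · exact ⟨heS, hbwd e heS hhd⟩
    have hdisj : Disjoint (S.filter (fun e => tl e ∈ Z ∧ hd e ∉ Z))
        (S.filter (fun e => hd e ∈ Z)) := by
      rw [Finset.disjoint_left]
      intro e he1 he2
      rw [Finset.mem_filter] at he1 he2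
      exact he1.2.2 he2.2
    have hsplit : ((S.filter (fun e => tl e ∈ Z)).card : ℤ)
        = ((S.filter (fun e => tl e ∈ Z ∧ hd e ∉ Z)).card : ℤ)
          + ((S.filter (fun e => hd e ∈ Z)).card : ℤ) := by
      rw [hunion, Finset.card_union_of_disjoint hdisj]
      push_cast
      ring
    -- the cut cardinality equals the flow value
    have hKval : ((S.filter (fun e => tl e ∈ Z ∧ hd e ∉ Z)).card : ℤ)
        = - net tl hd S t := by
      have hZsum : ∑ v ∈ T.filter (· ∈ Z), net tl hd S v
          = ((S.filter (fun e => tl e ∈ Z ∧ hd e ∉ Z)).card : ℤ) := by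
        unfold net
        rw [Finset.sum_sub_distrib, c1, c2]
        omega
      have hTA : T.filter (· ∈ A) ⊆ T.filter (· ∈ Z) := by
        intro v hv
        rw [Finset.mem_filter] at hv ⊢
        exact ⟨hv.1, hAZ hv.2⟩
      have hZA : ∑ v ∈ T.filter (· ∈ A), net tl hd S v
          = ∑ v ∈ T.filter (· ∈ Z), net tl hd S v := by
        refine Finset.sum_subset hTA (fun v hv hvA => ?_)
        rw [Finset.mem_filter] at hv hvA
        have h1 : v ∉ A := fun hc => hvA ⟨hv.1, hc⟩
        have h2 : v ≠ t := fun hc => htZ (hc ▸ hv.2)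
        exact hScons v h1 h2
      have hTsum : ∑ v ∈ T, net tl hd S v = 0 := by
        unfold net
        rw [Finset.sum_sub_distrib, c1u, c2u]
        ring
      have hsplitA : ∑ v ∈ T.filter (· ∈ A), net tl hd S v
          + ∑ v ∈ T.filter (fun v => ¬ v ∈ A), net tl hd S v
          = ∑ v ∈ T, net tl hd S v := Finset.sum_filter_add_sum_filter_not T _ _
      have hrest : ∑ v ∈ T.filter (fun v => ¬ v ∈ A), net tl hd S v
          = net tl hd S t := by
        refine Finset.sum_eq_single t (fun v hv hvt => ?_) (fun ht => ?_)
        · rw [Finset.mem_filter] at hv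
          exact hScons v hv.2 hvt
        · have htT : t ∉ T := fun hc => ht (Finset.mem_filter.2 ⟨hc, htA⟩)
          unfold net deg
          have e1 : S.filter (fun e => tl e = t) = ∅ := by
            rw [Finset.filter_eq_empty_iff]
            intro e heS hc
            exact htT (hc ▸ hTtl e heS)
          have e2 : S.filter (fun e => hd e = t) = ∅ := by
            rw [Finset.filter_eq_empty_iff]
            intro e heS hc
            exact htT (hc ▸ hThd e heS)
          rw [e1, e2]
          simp
      rw [← hZA] at hZsum
      omega
    -- decompose the max flow into paths
    have hle : (- net tl hd S t).toNat ≤ maxflow tl hd A t := by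
      obtain ⟨P, hP1, _, hP3⟩ := flow_decomp tl hd hacyc A t htA
        (- net tl hd S t).toNat S hScons (by rw [Int.toNat_of_nonneg hval0])
      exact le_maxflow tl hd A t _ P hP1 hP3
    omega

end MaxCut

section Final

variable {V E : Type*} [Fintype E] (tl hd : E → V)

lemma isPathFrom_sdiff (hacyc : ∀ v : V, ¬ Relation.TransGen (Rel tl hd) v v)
    (A : Set V) (t : V) (p : List E) :
    IsPathFrom tl hd A t p ↔ IsPathFrom tl hd (A \ {t}) t p := by
  constructor
  · rintro ⟨h, hA, hl, hc⟩
    refine ⟨h, ⟨hA, fun hmem => ?_⟩, hl, hc⟩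
    exact start_ne_end tl hd hacyc p hc h (by rw [hl]; exact hmem)
  · rintro ⟨h, hA, hl, hc⟩
    exact ⟨h, hA.1, hl, hc⟩

lemma maxflow_sdiff (hacyc : ∀ v : V, ¬ Relation.TransGen (Rel tl hd) v v)
    (A : Set V) (t : V) :
    maxflow tl hd (A \ {t}) t = maxflow tl hd A t := by
  unfold maxflow
  congr 1
  ext n
  constructor
  · rintro ⟨P, hP, hdisj⟩
    exact ⟨P, fun i => (isPathFrom_sdiff tl hd hacyc A t (P i)).2 (hP i), hdisj⟩
  · rintro ⟨P, hP, hdisj⟩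
    exact ⟨P, fun i => (isPathFrom_sdiff tl hd hacyc A t (P i)).1 (hP i), hdisj⟩

end Final

end NCAux


/-- Converse-direction rank obstruction.  Let `ψ` be a linear network code on a
finite DAG whose source edges `ι j` (of source `srcOf j`) carry the unit vectors
`b_j`, `U₁` spanned by the demanded coordinates `{j | srcOf j ∈ dem}` and `U₂` by
the rest.  If the rank of the `U₁`-components received at `t` equals
`d₁ = #{j | srcOf j ∈ dem}`, the rank of the `U₂`-components equals
`d₂ = maxflow(S* \ demanded sources, t)`, and `d₁ + d₂ > maxflow(S*, t)`, then
`t` cannot decode: some demanded unit vector is not in the span of the received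
vectors. -/
theorem stmt18 {V E F : Type*} [Fintype E] [Field F] {r m : ℕ}
    (tl hd : E → V)
    (hacyc : ∀ v : V,
      ¬ Relation.TransGen (fun a b => ∃ e : E, tl e = a ∧ hd e = b) v v)
    (srcOf : Fin r → Fin m) (ι : Fin r → E) (hι : Function.Injective ι)
    (ψ : E → Fin r → F)
    (hψsrc : ∀ j, ψ (ι j) = Pi.single j 1)
    (hψ : ∀ e, e ∉ Set.range ι →
      ψ e ∈ Submodule.span F {x | ∃ e', hd e' = tl e ∧ x = ψ e'})
    (dem : Set (Fin m)) (t : V)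
    (hrank1 : Module.finrank F (Submodule.span F
        {x | ∃ e, hd e = t ∧ x = fun j => if srcOf j ∈ dem then ψ e j else 0}) =
      Fintype.card {j : Fin r // srcOf j ∈ dem})
    (hrank2 : Module.finrank F (Submodule.span F
        {x | ∃ e, hd e = t ∧ x = fun j => if srcOf j ∉ dem then ψ e j else 0}) =
      maxflow tl hd {v | ∃ j, srcOf j ∉ dem ∧ tl (ι j) = v} t)
    (hgt : maxflow tl hd {v | ∃ j, tl (ι j) = v} t <
      Fintype.card {j : Fin r // srcOf j ∈ dem} +
        maxflow tl hd {v | ∃ j, srcOf j ∉ dem ∧ tl (ι j) = v} t) :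
    ¬ ∀ j : Fin r, srcOf j ∈ dem →
        (Pi.single j 1 : Fin r → F) ∈
          Submodule.span F {x | ∃ e, hd e = t ∧ x = ψ e} := by
  intro hdec
  have hacyc' : ∀ v : V, ¬ Relation.TransGen (NCAux.Rel tl hd) v v := hacyc
  set A : Set V := {v | ∃ j, tl (ι j) = v} with hA
  set gens : Set (Fin r → F) := {x | ∃ e, hd e = t ∧ x = ψ e} with hgens
  set W : Submodule F (Fin r → F) := Submodule.span F gens with hW
  -- upper bound : finrank W ≤ maxflow A t
  obtain ⟨K, hcut, hKle⟩ := NCAux.exists_cut tl hd hacyc' (A \ {t}) t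
    (fun hc => hc.2 rfl)
  have hcut' : ∀ p, IsPathFrom tl hd A t p → ∃ f ∈ p, f ∈ K := fun p hp =>
    hcut p ((NCAux.isPathFrom_sdiff tl hd hacyc' A t p).1 hp)
  have hspan : ∀ e : E, hd e = t → ψ e ∈ Submodule.span F (ψ '' ↑K) := by
    intro e he
    refine NCAux.cut_span tl hd hacyc' A ψ ?_ ↑K e ?_
    · intro e' hte'
      refine hψ e' (fun hre => hte' ?_)
      obtain ⟨j, rfl⟩ := hre
      exact ⟨j, rfl⟩
    · intro p h hc hA' hl
      obtain ⟨f, hf1, hf2⟩ := hcut' p ⟨h, hA', by rw [hl]; exact he, hc⟩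
      exact ⟨f, hf1, hf2⟩
  have hWle : W ≤ Submodule.span F (ψ '' ↑K) := by
    rw [hW, Submodule.span_le]
    rintro x ⟨e, he, rfl⟩
    exact hspan e he
  have hub : Module.finrank F W ≤ maxflow tl hd A t := by
    have h1 : Module.finrank F W ≤ Module.finrank F (Submodule.span F (ψ '' ↑K)) :=
      Submodule.finrank_mono hWle
    have h2 : Module.finrank F (Submodule.span F (ψ '' ↑K)) ≤ K.card := by
      have h3 : (ψ '' ↑K) = ↑(K.image ψ) := by rw [Finset.coe_image]
      rw [h3]
      exact le_trans (finrank_span_finset_le_card (K.image ψ))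
        (Finset.card_image_le)
    rw [← NCAux.maxflow_sdiff tl hd hacyc' A t]
    omega
  -- lower bound : d₁ + d₂ ≤ finrank W
  set π₂ : (Fin r → F) →ₗ[F] (Fin r → F) :=
    { toFun := fun x j => if srcOf j ∉ dem then x j else 0
      map_add' := by
        intro x y; funext j; by_cases h : srcOf j ∈ dem <;> simp [h]
      map_smul' := by
        intro c x; funext j; by_cases h : srcOf j ∈ dem <;> simp [h] } with hπ₂
  set f : W →ₗ[F] (Fin r → F) := π₂.comp W.subtype with hf
  have hrange : LinearMap.range f = Submodule.map π₂ W := by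
    rw [hf, LinearMap.range_comp, Submodule.range_subtype]
  have hmap : Submodule.map π₂ W = Submodule.span F
      {x | ∃ e, hd e = t ∧ x = fun j => if srcOf j ∉ dem then ψ e j else 0} := by
    rw [hW, Submodule.map_span]
    congr 1
    ext x
    constructor
    · rintro ⟨y, ⟨e, he, rfl⟩, rfl⟩
      exact ⟨e, he, rfl⟩
    · rintro ⟨e, he, rfl⟩
      exact ⟨ψ e, ⟨e, he, rfl⟩, rfl⟩
  have hrangerk : Module.finrank F (LinearMap.range f)
      = maxflow tl hd {v | ∃ j, srcOf j ∉ dem ∧ tl (ι j) = v} t := by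
    rw [hrange, hmap]
    exact hrank2
  -- demanded unit vectors
  set b : {j : Fin r // srcOf j ∈ dem} → (Fin r → F) :=
    fun j => Pi.single j.1 1 with hb
  have hbl : LinearIndependent F b := by
    have h1 : LinearIndependent F (fun i : Fin r => (Pi.single i 1 : Fin r → F)) := by
      have h2 := (Pi.basisFun F (Fin r)).linearIndependent
      have he : ⇑(Pi.basisFun F (Fin r)) = fun i : Fin r => (Pi.single i 1 : Fin r → F) :=
        funext fun i => Pi.basisFun_apply F (Fin r) i
      rwa [he] at h2
    exact h1.comp Subtype.val Subtype.val_injective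
  set U₁ : Submodule F (Fin r → F) := Submodule.span F (Set.range b) with hU₁
  have hU1W : U₁ ≤ W := by
    rw [hU₁, Submodule.span_le]
    rintro x ⟨j, rfl⟩
    exact hdec j.1 j.2
  have hU1ker : ∀ x ∈ U₁, π₂ x = 0 := by
    intro x hx
    have : U₁ ≤ LinearMap.ker π₂ := by
      rw [hU₁, Submodule.span_le]
      rintro y ⟨j, rfl⟩
      rw [SetLike.mem_coe, LinearMap.mem_ker]
      funext j'
      show (if srcOf j' ∉ dem then (Pi.single j.1 1 : Fin r → F) j' else 0) = 0
      by_cases h1 : srcOf j' ∉ dem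
      · rw [if_pos h1]
        have : j' ≠ j.1 := fun hc => h1 (hc ▸ j.2)
        rw [Pi.single_eq_of_ne this]
      · rw [if_neg h1]
    exact LinearMap.mem_ker.1 (this hx)
  -- inject U₁ into ker f
  set g : U₁ →ₗ[F] LinearMap.ker f :=
    LinearMap.codRestrict (LinearMap.ker f) (Submodule.inclusion hU1W)
      (fun u => by
        rw [LinearMap.mem_ker]
        show π₂ ((Submodule.inclusion hU1W u : W) : Fin r → F) = 0
        exact hU1ker u.1 u.2) with hg
  have hginj : Function.Injective g := by
    intro x y hxy
    have h1 : (Submodule.inclusion hU1W x : W) = Submodule.inclusion hU1W y := by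
      exact congrArg Subtype.val hxy
    exact Submodule.inclusion_injective hU1W h1
  have hkerge : Fintype.card {j : Fin r // srcOf j ∈ dem}
      ≤ Module.finrank F (LinearMap.ker f) := by
    have h1 : Module.finrank F U₁ = Fintype.card {j : Fin r // srcOf j ∈ dem} :=
      finrank_span_eq_card hbl
    rw [← h1]
    exact LinearMap.finrank_le_finrank_of_injective hginj
  have hrn := LinearMap.finrank_range_add_finrank_ker f
  rw [hrangerk] at hrn
  omega
end
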